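/- arXiv:1402.6302 — 5 statements merged into one kernel-verified Lean document; each statement's English description precedes it below -/
import Mathlib

section
/- For every α ∈ (0,1), the identity 2α ∫₀^{1/2} u^{-α}(1-u)^{-(α+1)} du = 2^{2α} − Γ(1-α)²/Γ(1-2α) holds, where Γ is the Euler Gamma function. -/
open Real Set intervalIntegral MeasureTheory

lemma beta_real (a b : ℝ) (ha : 0 < a) (hb : 0 < b) :
    ∫ x in (0:ℝ)..1, x ^ (a-1) * (1-x) ^ (b-1)
      = Gamma a * Gamma b / Gamma (a+b) := by
  have key := Complex.Gamma_mul_Gamma_eq_betaIntegral (s := (a:ℂ)) (t := (b:ℂ))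
    (by simpa using ha) (by simpa using hb)
  have hbeta : Complex.betaIntegral (a:ℂ) (b:ℂ)
      = ((∫ x in (0:ℝ)..1, x ^ (a-1) * (1-x) ^ (b-1) : ℝ) : ℂ) := by
    rw [Complex.betaIntegral, ← intervalIntegral.integral_ofReal]
    refine intervalIntegral.integral_congr ?_
    intro x hx
    rw [Set.uIcc_of_le (by norm_num : (0:ℝ) ≤ 1)] at hx
    simp only []
    rw [Complex.ofReal_mul, Complex.ofReal_cpow hx.1,
      Complex.ofReal_cpow (by linarith [hx.2] : (0:ℝ) ≤ 1 - x)]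
    push_cast
    ring
  rw [hbeta] at key
  rw [← Complex.ofReal_add, Complex.Gamma_ofReal, Complex.Gamma_ofReal,
    Complex.Gamma_ofReal] at key
  have key2 : Gamma a * Gamma b = Gamma (a+b) * ∫ x in (0:ℝ)..1, x ^ (a-1) * (1-x) ^ (b-1) := by
    exact_mod_cast key
  have hG : Gamma (a+b) ≠ 0 := (Real.Gamma_pos_of_pos (by linarith)).ne'
  rw [key2]
  field_simp

lemma integ (α β c : ℝ) (hα : α < 1) (hc0 : 0 ≤ c) (hc1 : c < 1) :
    IntervalIntegrable (fun u => u ^ (-α) * (1-u) ^ β) volume 0 c := by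
  refine (intervalIntegrable_rpow' (by linarith)).mul_continuousOn ?_
  refine ContinuousOn.rpow_const (by fun_prop) ?_
  intro x hx
  rw [Set.uIcc_of_le hc0] at hx
  left
  have : x < 1 := lt_of_le_of_lt hx.2 hc1
  intro h
  linarith [sub_eq_zero.mp h]

lemma deriv_key (α : ℝ) (hα0 : 0 < α) (hα1 : α < 1) (x : ℝ) (hx : 0 < x) (hx1 : x < 1) :
    HasDerivAt (fun u : ℝ => u ^ (1-α) * (1-u) ^ (-α))
      ((1-2*α) * (x ^ (-α) * (1-x) ^ (-α)) + α * (x ^ (-α) * (1-x) ^ (-(α+1)))) x := by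
  have h1x : (0:ℝ) < 1 - x := by linarith
  have h1 : HasDerivAt (fun u : ℝ => u ^ (1-α)) ((1-α) * x ^ (-α)) x := by
    have := Real.hasDerivAt_rpow_const (x := x) (p := 1-α) (Or.inl hx.ne')
    convert this using 2
    ring_nf
  have h2 : HasDerivAt (fun u : ℝ => (1-u) ^ (-α)) (α * (1-x) ^ (-(α+1))) x := by
    have hi : HasDerivAt (fun u : ℝ => 1 - u) (-1) x := by
      simpa using (hasDerivAt_id x).const_sub 1
    have := (Real.hasDerivAt_rpow_const (x := 1 - x) (p := -α) (Or.inl h1x.ne')).comp x hi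
    convert this using 1
    · rfl
    · rfl
    · rfl
    ring_nf
  have := h1.mul h2
  convert this using 1
  · rfl
  · rfl
  · rfl
  have e1 : x ^ (1-α) = x * x ^ (-α) := by
    rw [← Real.rpow_one_add' hx.le (by intro h; apply hα1.ne; linarith)]
    ring_nf
  have e2 : x * (1-x) ^ (-(α+1)) = (1-x) ^ (-(α+1)) - (1-x) ^ (-α) := by
    have h : (1-x) ^ (-α) = (1-x) * (1-x) ^ (-(α+1)) := by
      rw [← Real.rpow_one_add' h1x.le (by intro h; apply hα0.ne'; linarith)]
      ring_nf
    nlinarith [h]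
  rw [e1]
  linear_combination (-(α * x ^ (-α))) * e2

/-- For every `α ∈ (0,1)`,
`2α ∫₀^{1/2} u^{-α}(1-u)^{-(α+1)} du = 2^{2α} − Γ(1-α)²/Γ(1-2α)`. -/
theorem stmt0 (α : ℝ) (hα : α ∈ Set.Ioo (0:ℝ) 1) :
    2 * α * ∫ u in Set.Ioo (0:ℝ) (1/2), u ^ (-α) * (1 - u) ^ (-(α + 1)) =
      2 ^ (2 * α) - (Real.Gamma (1 - α)) ^ 2 / Real.Gamma (1 - 2 * α) := by
  obtain ⟨hα0, hα1⟩ := hα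
  set f1 : ℝ → ℝ := fun u => u ^ (-α) * (1-u) ^ (-(α+1)) with hf1
  set f2 : ℝ → ℝ := fun u => u ^ (-α) * (1-u) ^ (-α) with hf2
  have hI1 : IntervalIntegrable f1 volume 0 (1/2) := integ α (-(α+1)) (1/2) hα1 (by norm_num) (by norm_num)
  have hI2 : IntervalIntegrable f2 volume 0 (1/2) := integ α (-α) (1/2) hα1 (by norm_num) (by norm_num)
  -- FTC
  have hcont : ContinuousOn (fun u : ℝ => u ^ (1-α) * (1-u) ^ (-α)) (Icc 0 (1/2)) := by
    refine ContinuousOn.mul ?_ ?_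
    · intro x hx
      exact (Real.continuousAt_rpow_const x (1-α) (Or.inr (by linarith))).continuousWithinAt
    · refine ContinuousOn.rpow_const (by fun_prop) ?_
      intro x hx
      left
      intro h
      have := sub_eq_zero.mp h
      have := hx.2
      norm_num at this ⊢
      linarith [sub_eq_zero.mp h]
  have hint : IntervalIntegrable (fun x => (1-2*α) * f2 x + α * f1 x) volume 0 (1/2) :=
    (hI2.const_mul _).add (hI1.const_mul _)
  have hFTC : ∫ x in (0:ℝ)..(1/2), ((1-2*α) * f2 x + α * f1 x)
      = (1/2:ℝ) ^ (1-α) * (1-(1/2:ℝ)) ^ (-α) - (0:ℝ) ^ (1-α) * (1-(0:ℝ)) ^ (-α) := by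
    exact intervalIntegral.integral_eq_sub_of_hasDerivAt_of_le (by norm_num) hcont
      (fun x hx => deriv_key α hα0 hα1 x hx.1 (by linarith [hx.2])) hint
  have hz : ((0:ℝ)) ^ (1-α) * (1-(0:ℝ)) ^ (-α) = 0 := by
    rw [Real.zero_rpow (by intro h; apply hα1.ne; linarith)]
    ring
  have hsum : ∫ x in (0:ℝ)..(1/2), ((1-2*α) * f2 x + α * f1 x)
      = (1-2*α) * (∫ x in (0:ℝ)..(1/2), f2 x) + α * (∫ x in (0:ℝ)..(1/2), f1 x) := by
    rw [intervalIntegral.integral_add (hI2.const_mul _) (hI1.const_mul _),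
      intervalIntegral.integral_const_mul, intervalIntegral.integral_const_mul]
  -- symmetry of f2
  have hsymf : ∀ x : ℝ, f2 (1 - x) = f2 x := by
    intro x
    simp only [hf2]
    rw [show (1:ℝ) - (1-x) = x by ring]
    ring
  have hI2b : IntervalIntegrable f2 volume (1/2) 1 := by
    have := (hI2.comp_sub_left 1)
    have heq : (fun x => f2 (1 - x)) = f2 := funext hsymf
    rw [heq] at this
    norm_num at this
    exact this.symm
  have hsym : ∫ x in (1/2:ℝ)..1, f2 x = ∫ x in (0:ℝ)..(1/2), f2 x := by
    have h0 := intervalIntegral.integral_comp_sub_left (a := (0:ℝ)) (b := 1/2) f2 1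
    rw [show (1:ℝ)-1/2 = 1/2 by norm_num, show (1:ℝ)-0 = 1 by norm_num] at h0
    rw [← h0]
    exact intervalIntegral.integral_congr fun x _ => hsymf x
  have hsplit : ∫ x in (0:ℝ)..1, f2 x = 2 * ∫ x in (0:ℝ)..(1/2), f2 x := by
    rw [← intervalIntegral.integral_add_adjacent_intervals hI2 hI2b, hsym]
    ring
  -- beta
  have hB : ∫ x in (0:ℝ)..1, f2 x = Gamma (1-α) ^ 2 / Gamma (2-2*α) := by
    have := beta_real (1-α) (1-α) (by linarith) (by linarith)
    rw [show (1-α) - 1 = -α by ring] at this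
    rw [show (1-α) + (1-α) = 2-2*α by ring] at this
    rw [show Gamma (1-α) * Gamma (1-α) = Gamma (1-α) ^ 2 by ring] at this
    exact this
  -- gamma recurrence
  have hg : Gamma (1-α) ^ 2 / Gamma (1-2*α) = (1-2*α) * (Gamma (1-α) ^ 2 / Gamma (2-2*α)) := by
    by_cases h : α = 1/2
    · subst h
      norm_num [Real.Gamma_zero]
    · have hne0 : (1:ℝ) - 2*α ≠ 0 := by intro hh; apply h; linarith
      have h2 : Gamma (2-2*α) = (1-2*α) * Gamma (1-2*α) := by
        rw [show (2:ℝ)-2*α = (1-2*α)+1 by ring, Real.Gamma_add_one hne0]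
      have hne : Gamma (1-2*α) ≠ 0 := by
        apply Real.Gamma_ne_zero
        intro m heq
        rcases Nat.eq_zero_or_pos m with hm | hm
        · subst hm; norm_num at heq; exact hne0 heq
        · have : (1:ℝ) ≤ (m:ℝ) := by exact_mod_cast hm
          linarith
      rw [h2]
      rw [mul_div_left_comm, div_mul_cancel_left₀ hne0, div_eq_mul_inv]
  -- value at 1/2
  have hc2 : 2 * ((1/2:ℝ) ^ (1-α) * (1-(1/2:ℝ)) ^ (-α)) = 2 ^ (2*α) := by
    norm_num
    rw [← Real.rpow_add (by norm_num : (0:ℝ) < 1/2)]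
    rw [show (1:ℝ)/2 = 2⁻¹ by norm_num, Real.inv_rpow (by norm_num),
      ← Real.rpow_neg (by norm_num)]
    rw [show (2:ℝ) * 2 ^ (-(1 - α + -α)) = 2 ^ (1:ℝ) * 2 ^ (-(1 - α + -α)) by
      rw [Real.rpow_one], ← Real.rpow_add (by norm_num)]
    ring_nf
  -- convert set integral
  have hconv : ∫ u in Set.Ioo (0:ℝ) (1/2), u ^ (-α) * (1 - u) ^ (-(α + 1))
      = ∫ x in (0:ℝ)..(1/2), f1 x := by
    rw [intervalIntegral.integral_of_le (by norm_num), ← MeasureTheory.integral_Ioc_eq_integral_Ioo]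
  rw [hconv]
  rw [hsum, hz] at hFTC
  linear_combination 2 * hFTC + hg - (1-2*α) * hB + (1-2*α) * hsplit + hc2
end

section
/- For every α ∈ (0,1) with α ≠ 1/2, the series ∑_{j=0}^∞ (Γ(α+j)/(2^j Γ(α) Γ(j+1))) · (α/(j-α)) converges and equals −2^{-α-1}(1-2α) B(1-α,1-α) − 2^{α-1}, where B(a,b) = Γ(a)Γ(b)/Γ(a+b). -/
open Real MeasureTheory Set Filter Topology



noncomputable def cc (α : ℝ) (j : ℕ) : ℝ :=
  Real.Gamma (α + j) / (Real.Gamma α * Real.Gamma (j + 1))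


lemma cc_pos {α : ℝ} (h0 : 0 < α) (j : ℕ) : 0 < cc α j := by
  have h1 : 0 < Real.Gamma (α + j) := Real.Gamma_pos_of_pos (by positivity)
  have h2 : 0 < Real.Gamma α := Real.Gamma_pos_of_pos h0
  have h3 : 0 < Real.Gamma ((j : ℝ) + 1) := Real.Gamma_pos_of_pos (by positivity)
  exact div_pos h1 (by positivity)

lemma cc_zero' {α : ℝ} (h0 : 0 < α) : cc α 0 = 1 := by
  have h2 : Real.Gamma α ≠ 0 := (Real.Gamma_pos_of_pos h0).ne'
  simp [cc, Real.Gamma_one]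
  exact h2

lemma cc_succ {α : ℝ} (h0 : 0 < α) (j : ℕ) :
    cc α (j + 1) = cc α j * ((α + j) / (j + 1)) := by
  have hne : α + (j : ℝ) ≠ 0 := by positivity
  have hΓ : Real.Gamma (α + (j + 1 : ℕ)) = (α + j) * Real.Gamma (α + j) := by
    push_cast
    rw [show α + ((j : ℝ) + 1) = (α + j) + 1 by ring, Real.Gamma_add_one hne]
  have hΓ2 : Real.Gamma (((j + 1 : ℕ) : ℝ) + 1) = ((j : ℝ) + 1) * Real.Gamma ((j : ℝ) + 1) := by
    push_cast
    rw [show ((j : ℝ) + 1) + 1 = ((j : ℝ) + 1) + 1 by ring, Real.Gamma_add_one (by positivity)]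
  have hA : Real.Gamma α ≠ 0 := (Real.Gamma_pos_of_pos h0).ne'
  have hB : Real.Gamma ((j : ℝ) + 1) ≠ 0 := (Real.Gamma_pos_of_pos (by positivity)).ne'
  have hj1 : ((j : ℝ) + 1) ≠ 0 := by positivity
  rw [cc, cc, hΓ, hΓ2]
  field_simp

lemma cc_le_one {α : ℝ} (h0 : 0 < α) (h1 : α < 1) (j : ℕ) : cc α j ≤ 1 := by
  induction j with
  | zero => rw [cc_zero' h0]
  | succ n ih =>
    rw [cc_succ h0 n]
    have h : (α + n) / (n + 1) ≤ 1 := by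
      rw [div_le_one (by positivity)]
      linarith [Nat.cast_nonneg (α := ℝ) n]
    calc cc α n * ((α + n) / (n + 1)) ≤ 1 * 1 :=
          mul_le_mul ih h (by positivity) zero_le_one
      _ = 1 := one_mul 1







lemma summable_aux : Summable (fun j : ℕ => (j : ℝ) * (3/4) ^ (j - 1)) := by
  have h : Summable (fun j : ℕ => (4/3 : ℝ) * ((j : ℝ) ^ 1 * (3/4) ^ j)) :=
    (summable_pow_mul_geometric_of_norm_lt_one 1 (r := (3/4 : ℝ))
      (by rw [Real.norm_eq_abs, abs_of_nonneg] <;> norm_num)).mul_left _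
  refine Summable.of_nonneg_of_le (fun j => by positivity) (fun j => ?_) h
  cases j with
  | zero => simp
  | succ n =>
    have e1 : ((n + 1 : ℕ) : ℝ) * (3/4) ^ (n + 1 - 1) = (n + 1 : ℝ) * (3/4) ^ n := by
      push_cast; norm_num
    have e2 : (4/3 : ℝ) * (((n + 1 : ℕ) : ℝ) ^ 1 * (3/4) ^ (n + 1)) = (n+1 : ℝ) * (3/4) ^ n := by
      push_cast; rw [pow_succ]; ring
    rw [e1, e2]

lemma summable_cc_pow {α : ℝ} (h0 : 0 < α) (h1 : α < 1) {x : ℝ} (hx : |x| < 3/4) :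
    Summable (fun j : ℕ => cc α j * x ^ j) := by
  refine Summable.of_norm_bounded (g := fun j => (3/4 : ℝ) ^ j)
    (summable_geometric_of_lt_one (by norm_num) (by norm_num)) (fun j => ?_)
  rw [norm_mul, norm_pow]
  calc ‖cc α j‖ * ‖x‖ ^ j ≤ 1 * (3/4) ^ j := by
        refine mul_le_mul ?_ ?_ (by positivity) zero_le_one
        · rw [Real.norm_eq_abs, abs_of_pos (cc_pos h0 j)]; exact cc_le_one h0 h1 j
        · exact pow_le_pow_left₀ (norm_nonneg x) (le_of_lt hx) j
    _ = (3/4) ^ j := one_mul _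

lemma hasSum_binomial {α : ℝ} (h0 : 0 < α) (h1 : α < 1) {x : ℝ}
    (hx : x ∈ Set.Ioo (-(3/4) : ℝ) (3/4)) :
    HasSum (fun j : ℕ => cc α j * x ^ j) ((1 - x) ^ (-α)) := by
  set t : Set ℝ := Set.Ioo (-(3/4) : ℝ) (3/4) with ht
  set S : ℝ → ℝ := fun y => ∑' j : ℕ, cc α j * y ^ j with hSdef
  set D : ℝ → ℝ := fun y => ∑' j : ℕ, cc α j * ((j : ℝ) * y ^ (j - 1)) with hDdef
  have habs : ∀ y ∈ t, |y| < 3/4 := by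
    intro y hy; rw [abs_lt]; exact ⟨hy.1, hy.2⟩
  have hpos1 : ∀ y ∈ t, (0:ℝ) < 1 - y := by
    intro y hy; have := hy.2; linarith
  have hbound : ∀ (n : ℕ), ∀ y ∈ t, ‖cc α n * ((n : ℝ) * y ^ (n - 1))‖ ≤ (n : ℝ) * (3/4) ^ (n-1) := by
    intro n y hy
    rw [norm_mul, norm_mul, norm_pow]
    have h1' : ‖cc α n‖ ≤ 1 := by
      rw [Real.norm_eq_abs, abs_of_pos (cc_pos h0 n)]; exact cc_le_one h0 h1 n
    have h2' : ‖y‖ ^ (n-1) ≤ (3/4 : ℝ) ^ (n-1) :=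
      pow_le_pow_left₀ (norm_nonneg y) (le_of_lt (habs y hy)) _
    calc ‖cc α n‖ * (‖(n : ℝ)‖ * ‖y‖ ^ (n-1)) ≤ 1 * ((n : ℝ) * (3/4) ^ (n-1)) := by
          refine mul_le_mul h1' ?_ (by positivity) zero_le_one
          refine mul_le_mul ?_ h2' (by positivity) (by positivity)
          rw [Real.norm_natCast]
      _ = (n : ℝ) * (3/4) ^ (n-1) := one_mul _
  have hS0 : Summable (fun j : ℕ => cc α j * (0:ℝ) ^ j) := by
    apply summable_of_ne_finset_zero (s := {0})
    intro j hj
    have : j ≠ 0 := by simpa using hj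
    simp [zero_pow this]
  have hSderiv : ∀ x ∈ t, HasDerivAt S (D x) x := by
    intro x hx
    exact hasDerivAt_tsum_of_isPreconnected summable_aux isOpen_Ioo
      (convex_Ioo _ _).isPreconnected
      (fun n y _ => (hasDerivAt_pow n y).const_mul (cc α n)) hbound
      (show (0:ℝ) ∈ t by constructor <;> norm_num) hS0 hx
  have hkey : ∀ x ∈ t, (1 - x) * D x = α * S x := by
    intro x hxt
    have hDsum : Summable (fun j : ℕ => cc α j * ((j:ℝ) * x ^ (j-1))) :=
      Summable.of_norm_bounded summable_aux (fun n => hbound n x hxt)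
    have hD : HasSum (fun j : ℕ => cc α j * ((j:ℝ) * x ^ (j-1))) (D x) := hDsum.hasSum
    have hSsum := summable_cc_pow h0 h1 (habs x hxt)
    have e1 : ∀ j : ℕ, x * (cc α j * ((j:ℝ) * x ^ (j-1))) = cc α j * ((j:ℝ) * x ^ j) := by
      intro j
      cases j with
      | zero => simp
      | succ n => simp only [Nat.add_sub_cancel]; rw [pow_succ]; ring
    have h1' : HasSum (fun j : ℕ => cc α j * ((j:ℝ) * x ^ j)) (x * D x) := by
      have := hD.mul_left x
      simpa only [e1] using this
    have h2' : HasSum (fun j : ℕ => cc α j * ((α + j) * x ^ j)) (D x) := by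
      have h2 : HasSum (fun j : ℕ => cc α (j+1) * (((j:ℝ)+1) * x ^ j)) (D x - 0) := by
        have := (hasSum_nat_add_iff' (f := fun j : ℕ => cc α j * ((j:ℝ) * x ^ (j-1))) 1).mpr
          (by simpa using hD)
        simp only [Finset.range_one, Finset.sum_singleton, Nat.cast_zero, zero_mul, mul_zero,
          sub_zero] at this ⊢
        convert this using 2 with j
        · rfl
        · simp
      rw [sub_zero] at h2
      have e2 : ∀ j : ℕ, cc α (j+1) * (((j:ℝ)+1) * x ^ j) = cc α j * ((α + j) * x ^ j) := by
        intro j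
        rw [cc_succ h0 j]
        have : ((j:ℝ) + 1) ≠ 0 := by positivity
        field_simp
      simpa only [e2] using h2
    have h4 : HasSum (fun j : ℕ => cc α j * ((α + j) * x ^ j) - cc α j * ((j:ℝ) * x ^ j))
        (D x - x * D x) := h2'.sub h1'
    have h5 : HasSum (fun j : ℕ => α * (cc α j * x ^ j)) (α * S x) := hSsum.hasSum.mul_left α
    have e3 : ∀ j : ℕ, cc α j * ((α + j) * x ^ j) - cc α j * ((j:ℝ) * x ^ j)
        = α * (cc α j * x ^ j) := by intro j; ring
    have h4' : HasSum (fun j : ℕ => α * (cc α j * x ^ j)) (D x - x * D x) := by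
      simpa only [e3] using h4
    have := h4'.unique h5
    linarith [this]
  -- constancy of G
  set G : ℝ → ℝ := fun y => S y * (1 - y) ^ α with hGdef
  have hGderiv : ∀ x ∈ t, HasDerivAt G 0 x := by
    intro x hxt
    have hp := hpos1 x hxt
    have hu : HasDerivAt (fun y : ℝ => 1 - y) (-1) x := (hasDerivAt_id x).const_sub 1
    have hrp : HasDerivAt (fun y : ℝ => (1 - y) ^ α) (α * (1 - x) ^ (α - 1) * (-1)) x := by
      have h := Real.hasDerivAt_rpow_const (x := 1 - x) (p := α) (Or.inl hp.ne')
      exact h.comp x hu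
    have hprod := (hSderiv x hxt).mul hrp
    have hval : D x * (1 - x) ^ α + S x * (α * (1 - x) ^ (α - 1) * (-1)) = 0 := by
      have hsplit : (1 - x) ^ α = (1 - x) ^ (α - 1) * (1 - x) := by
        rw [← Real.rpow_add_one hp.ne' (α - 1), sub_add_cancel]
      rw [hsplit]
      have hk := hkey x hxt
      linear_combination (1 - x) ^ (α - 1) * hk
    rw [hval] at hprod
    exact hprod
  have h0t : (0:ℝ) ∈ t := by constructor <;> norm_num
  have hconst : ∀ x ∈ t, G x = G 0 := by
    intro x hxt
    have hle := (convex_Ioo (-(3/4):ℝ) (3/4)).norm_image_sub_le_of_norm_hasDerivWithin_le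
      (f := G) (f' := fun _ => 0) (C := 0)
      (fun y hy => (hGderiv y hy).hasDerivWithinAt) (fun y _ => by simp) h0t hxt
    simp only [norm_eq_abs, zero_mul] at hle
    have := abs_nonpos_iff.mp (le_trans hle (by norm_num))
    linarith [abs_nonneg (G x - G 0), sub_eq_zero.mp this]
  have hG0 : G 0 = 1 := by
    have hS0v : S 0 = 1 := by
      have hr : S 0 = ∑' j : ℕ, cc α j * (0:ℝ) ^ j := rfl
      rw [hr, tsum_eq_single 0 (fun j hj => by simp [zero_pow hj])]
      simp [cc_zero' h0]
    simp [hGdef, hS0v]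
  have hSx : S x * (1 - x) ^ α = 1 := by
    have := hconst x hx
    rw [hG0] at this
    exact this
  have hp := hpos1 x hx
  have hrpne : (1 - x) ^ α ≠ 0 := (Real.rpow_pos_of_pos hp α).ne'
  have hSval : S x = (1 - x) ^ (-α) := by
    rw [Real.rpow_neg hp.le]
    field_simp at hSx ⊢
    linarith [hSx]
  have hsum := (summable_cc_pow h0 h1 (habs x hx)).hasSum
  rwa [show ∑' j : ℕ, cc α j * x ^ j = S x from rfl, hSval] at hsum


noncomputable def mm (α : ℝ) (j : ℕ) : ℝ :=
  Real.Gamma (α + j) / (2 ^ j * Real.Gamma α * Real.Gamma (j + 1)) * (α / (j - α))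






lemma mm_eq (α : ℝ) (j : ℕ) : mm α j = cc α j / 2 ^ j * (α / ((j:ℝ) - α)) := by
  rw [mm, cc]; ring

lemma mm_zero {α : ℝ} (h0 : 0 < α) : mm α 0 = -1 := by
  rw [mm_eq, cc_zero' h0]
  norm_num [h0.ne']

lemma mm_succ_nonneg {α : ℝ} (h0 : 0 < α) (h1 : α < 1) (j : ℕ) : 0 ≤ mm α (j + 1) := by
  rw [mm_eq]
  have h2 : (0:ℝ) < ((j:ℕ) + 1 : ℕ) - α := by push_cast; linarith [Nat.cast_nonneg (α := ℝ) j]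
  have := cc_pos h0 (j+1)
  positivity

lemma summable_mm {α : ℝ} (h0 : 0 < α) (h1 : α < 1) : Summable (mm α) := by
  refine Summable.of_norm_bounded (g := fun j => (1/(1-α) + 1) * (1/2 : ℝ) ^ j)
    ((summable_geometric_of_lt_one (by norm_num) (by norm_num)).mul_left _) (fun j => ?_)
  have hK : (0:ℝ) < 1/(1-α) + 1 := by
    have : (0:ℝ) < 1 - α := by linarith
    positivity
  rw [mm_eq, norm_mul, norm_div, norm_pow]
  cases j with
  | zero =>
    have h1a : (0:ℝ) < 1 - α := by linarith
    have e : α / (((0:ℕ):ℝ) - α) = -1 := by push_cast; rw [zero_sub]; field_simp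
    rw [cc_zero' h0, e]
    simp only [norm_one, pow_zero, div_one, one_mul, norm_neg]
    have : (0:ℝ) < 1/(1-α) := by positivity
    linarith
  | succ n =>
    have hd : (0:ℝ) < ((n:ℕ) + 1 : ℕ) - α := by push_cast; linarith [Nat.cast_nonneg (α := ℝ) n]
    have hcc := cc_pos h0 (n+1)
    have hb1 : ‖cc α (n+1)‖ / ‖(2:ℝ)‖ ^ (n+1) ≤ (1/2:ℝ)^(n+1) := by
      rw [Real.norm_eq_abs, abs_of_pos hcc, Real.norm_eq_abs, abs_two]
      rw [div_pow, one_pow]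
      exact div_le_div_of_nonneg_right (cc_le_one h0 h1 (n+1)) (by positivity) |>.trans_eq rfl
    have hb2 : ‖α / (((n+1:ℕ):ℝ) - α)‖ ≤ 1/(1-α) + 1 := by
      rw [Real.norm_eq_abs, abs_of_pos (by positivity : (0:ℝ) < α / (((n+1:ℕ):ℝ) - α))]
      have h1a : (0:ℝ) < 1 - α := by linarith
      have hle : ((1:ℝ) - α) ≤ ((n+1:ℕ):ℝ) - α := by
        push_cast; linarith [Nat.cast_nonneg (α := ℝ) n]
      calc α / (((n+1:ℕ):ℝ) - α) ≤ α / (1 - α) := by gcongr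
        _ ≤ 1 / (1-α) := by
            rw [div_le_div_iff_of_pos_right h1a]; linarith
        _ ≤ 1/(1-α) + 1 := by linarith
    calc ‖cc α (n+1)‖ / ‖(2:ℝ)‖ ^ (n+1) * ‖α / (((n+1:ℕ):ℝ) - α)‖
        ≤ (1/2:ℝ)^(n+1) * (1/(1-α) + 1) := by
          exact mul_le_mul hb1 hb2 (norm_nonneg _) (by positivity)
      _ = (1/(1-α) + 1) * (1/2:ℝ)^(n+1) := by ring

lemma integral_rpow_Ioo {p : ℝ} (hp : -1 < p) :
    ∫ t in Ioo (0:ℝ) (1/2), t ^ p = (1/2:ℝ) ^ (p+1) / (p+1) := by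
  rw [← MeasureTheory.integral_Ioc_eq_integral_Ioo,
    ← intervalIntegral.integral_of_le (by norm_num : (0:ℝ) ≤ 1/2)]
  rw [integral_rpow (Or.inl hp)]
  rw [Real.zero_rpow (by linarith : p + 1 ≠ 0)]
  ring

lemma integrableOn_rpow_Ioo {p : ℝ} (hp : -1 < p) :
    IntegrableOn (fun t : ℝ => t ^ p) (Ioo (0:ℝ) (1/2)) := by
  have h := intervalIntegral.intervalIntegrable_rpow' (a := 0) (b := 1/2) hp
  rw [intervalIntegrable_iff_integrableOn_Ioc_of_le (by norm_num : (0:ℝ) ≤ 1/2)] at h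
  exact h.mono_set Ioo_subset_Ioc_self

lemma term_integral {α : ℝ} (h0 : 0 < α) (h1 : α < 1) (j : ℕ) :
    ∫ t in Ioo (0:ℝ) (1/2), α * cc α (j+1) * t ^ ((j:ℝ) - α)
      = (2:ℝ) ^ α * mm α (j+1) := by
  have hp : (-1:ℝ) < (j:ℝ) - α := by
    have := Nat.cast_nonneg (α := ℝ) j; linarith
  rw [MeasureTheory.integral_const_mul, integral_rpow_Ioo hp]
  rw [mm_eq]
  have hd : (0:ℝ) < ((j:ℝ) - α) + 1 := by linarith
  have hcast : (((j+1:ℕ)):ℝ) - α = ((j:ℝ) - α) + 1 := by push_cast; ring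
  rw [hcast]
  have hhalf : (1/2:ℝ) ^ (((j:ℝ) - α) + 1) = (2:ℝ) ^ (-(((j:ℝ) - α) + 1)) := by
    rw [one_div, Real.inv_rpow (by norm_num : (0:ℝ) ≤ 2), Real.rpow_neg (by norm_num : (0:ℝ) ≤ 2)]
  rw [hhalf]
  have hnat : ((2:ℝ) ^ (j+1 : ℕ)) = (2:ℝ) ^ (((j:ℝ)+1)) := by
    rw [← Real.rpow_natCast]; push_cast; ring_nf
  rw [hnat]
  have hsplit : (2:ℝ) ^ (-((j:ℝ) - α + 1)) = 2^α / (2:ℝ)^((j:ℝ)+1) := by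
    rw [eq_div_iff (Real.rpow_pos_of_pos two_pos ((j:ℝ)+1)).ne', ← Real.rpow_add two_pos]
    congr 1; ring
  rw [hsplit]
  ring

lemma pointwise_hasSum {α : ℝ} (h0 : 0 < α) (h1 : α < 1) {t : ℝ}
    (ht : t ∈ Ioo (0:ℝ) (1/2)) :
    HasSum (fun j : ℕ => α * cc α (j+1) * t ^ ((j:ℝ) - α))
      (α * t ^ (-α - 1) * ((1 - t) ^ (-α) - 1)) := by
  have htpos : (0:ℝ) < t := ht.1
  have hbin := hasSum_binomial h0 h1 (x := t)
    ⟨by linarith [ht.1], by linarith [ht.2]⟩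
  have hshift : HasSum (fun j : ℕ => cc α (j+1) * t ^ (j+1)) ((1 - t) ^ (-α) - 1) := by
    have h := (hasSum_nat_add_iff' (f := fun j : ℕ => cc α j * t ^ j) 1).mpr hbin
    simpa [cc_zero' h0] using h
  have hmul := hshift.mul_left (α * t ^ (-α - 1))
  have e : ∀ j : ℕ, α * t ^ (-α-1) * (cc α (j+1) * t ^ (j+1))
      = α * cc α (j+1) * t ^ ((j:ℝ) - α) := by
    intro j
    have : t ^ ((j:ℕ)+1) = t ^ (((j:ℝ)+1)) := by
      rw [← Real.rpow_natCast]; push_cast; ring_nf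
    rw [this, show α * t ^ (-α-1) * (cc α (j+1) * t ^ ((j:ℝ)+1))
      = α * cc α (j+1) * (t ^ (-α-1) * t ^ ((j:ℝ)+1)) by ring, ← Real.rpow_add htpos]
    congr 2
    ring
  have : α * t ^ (-α-1) * ((1-t) ^ (-α) - 1)
      = α * t ^ (-α - 1) * ((1 - t) ^ (-α) - 1) := by ring
  rw [← this]
  exact (by simpa only [e] using hmul)

lemma integrableOn_term {α : ℝ} (h0 : 0 < α) (h1 : α < 1) (j : ℕ) :
    IntegrableOn (fun t : ℝ => α * cc α (j+1) * t ^ ((j:ℝ) - α)) (Ioo (0:ℝ) (1/2)) := by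
  have hp : (-1:ℝ) < (j:ℝ) - α := by
    have := Nat.cast_nonneg (α := ℝ) j; linarith
  exact (integrableOn_rpow_Ioo hp).const_mul _

lemma tail_eq_integral {α : ℝ} (h0 : 0 < α) (h1 : α < 1) :
    ∑' j : ℕ, mm α (j+1)
      = (2:ℝ) ^ (-α) * ∫ t in Ioo (0:ℝ) (1/2), α * t ^ (-α-1) * ((1-t) ^ (-α) - 1) := by
  set f : ℕ → ℝ → ℝ := fun j t => α * cc α (j+1) * t ^ ((j:ℝ) - α) with hf
  have hmeas : ∀ j : ℕ, AEStronglyMeasurable (f j) (volume.restrict (Ioo (0:ℝ) (1/2))) := by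
    intro j
    exact ((integrableOn_term h0 h1 j).aestronglyMeasurable)
  have hnn : ∀ j : ℕ, 0 ≤ᵐ[volume.restrict (Ioo (0:ℝ) (1/2))] f j := by
    intro j
    filter_upwards [MeasureTheory.ae_restrict_mem measurableSet_Ioo] with t ht
    have := Real.rpow_nonneg (le_of_lt ht.1) ((j:ℝ) - α)
    have := (cc_pos h0 (j+1)).le
    positivity
  have hlin : ∀ j : ℕ, ∫⁻ t, ‖f j t‖₊ ∂(volume.restrict (Ioo (0:ℝ) (1/2)))
      = ENNReal.ofReal ((2:ℝ) ^ α * mm α (j+1)) := by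
    intro j
    rw [← term_integral h0 h1 j,
      MeasureTheory.ofReal_integral_eq_lintegral_ofReal (integrableOn_term h0 h1 j) (hnn j)]
    refine lintegral_congr_ae ?_
    filter_upwards [hnn j] with t ht
    rw [← Real.enorm_eq_ofReal ht, enorm_eq_nnnorm]
  have hsum_tail : Summable (fun j : ℕ => mm α (j+1)) :=
    (summable_mm h0 h1).comp_injective (add_left_injective 1)
  have h2pos : (0:ℝ) < (2:ℝ) ^ α := Real.rpow_pos_of_pos two_pos α
  have hfin : ∑' j : ℕ, ∫⁻ t, ‖f j t‖₊ ∂(volume.restrict (Ioo (0:ℝ) (1/2))) ≠ ⊤ := by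
    rw [tsum_congr hlin,
      ← ENNReal.ofReal_tsum_of_nonneg
        (fun j => mul_nonneg h2pos.le (mm_succ_nonneg h0 h1 j))
        (hsum_tail.mul_left _)]
    exact ENNReal.ofReal_ne_top
  have hswap := MeasureTheory.integral_tsum hmeas hfin
  have hleft : (∫ t in Ioo (0:ℝ) (1/2), (∑' j : ℕ, f j t))
      = ∫ t in Ioo (0:ℝ) (1/2), α * t ^ (-α-1) * ((1-t) ^ (-α) - 1) :=
    MeasureTheory.setIntegral_congr_fun measurableSet_Ioo
      (fun t ht => (pointwise_hasSum h0 h1 ht).tsum_eq)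
  have hright : (∑' j : ℕ, ∫ t in Ioo (0:ℝ) (1/2), f j t)
      = (2:ℝ) ^ α * ∑' j : ℕ, mm α (j+1) := by
    rw [tsum_congr (fun j => term_integral h0 h1 j), tsum_mul_left]
  have hcomb : (2:ℝ) ^ α * ∑' j : ℕ, mm α (j+1)
      = ∫ t in Ioo (0:ℝ) (1/2), α * t ^ (-α-1) * ((1-t) ^ (-α) - 1) := by
    rw [← hright, ← hswap, hleft]
  rw [Real.rpow_neg (by norm_num : (0:ℝ) ≤ 2), ← hcomb]
  field_simp



section Beta
variable {α : ℝ} (h0 : 0 < α) (h1 : α < 1)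

lemma contOn_psi2 : ContinuousOn (fun t : ℝ => t ^ (-α) * (1-t) ^ (-α)) (Ioo (0:ℝ) (1/2)) := by
  apply ContinuousOn.mul
  · exact continuousOn_id.rpow_const (fun t ht => Or.inl (ne_of_gt ht.1))
  · exact (continuousOn_const.sub continuousOn_id).rpow_const
      (fun t ht => Or.inl (by have := ht.2; norm_num; linarith))

include h0 h1 in
lemma integrableOn_psi2 :
    IntegrableOn (fun t : ℝ => t ^ (-α) * (1-t) ^ (-α)) (Ioo (0:ℝ) (1/2)) := by
  have hdom : IntegrableOn (fun t : ℝ => (2:ℝ)^α * t ^ (-α)) (Ioo (0:ℝ) (1/2)) :=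
    (integrableOn_rpow_Ioo (by linarith)).const_mul _
  refine Integrable.mono hdom ((contOn_psi2).aestronglyMeasurable measurableSet_Ioo) ?_
  filter_upwards [MeasureTheory.ae_restrict_mem measurableSet_Ioo] with t ht
  have ht0 := ht.1
  have ht2 := ht.2
  have h1t : (0:ℝ) < 1 - t := by linarith
  have hb : (1-t) ^ (-α) ≤ (2:ℝ)^α := by
    calc (1-t) ^ (-α) ≤ (1/2 : ℝ) ^ (-α) := by
          exact Real.rpow_le_rpow_of_nonpos (by norm_num) (by linarith) (by linarith)
      _ = (2:ℝ)^α := by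
          rw [one_div, Real.inv_rpow (by norm_num : (0:ℝ) ≤ 2), ← Real.rpow_neg (by norm_num : (0:ℝ) ≤ 2), neg_neg]
  have htp : (0:ℝ) ≤ t ^ (-α) := Real.rpow_nonneg ht0.le _
  rw [Real.norm_eq_abs, Real.norm_eq_abs,
    abs_of_nonneg (by positivity : (0:ℝ) ≤ t ^ (-α) * (1-t)^(-α)),
    abs_of_nonneg (by positivity : (0:ℝ) ≤ (2:ℝ)^α * t^(-α))]
  calc t ^ (-α) * (1-t)^(-α) ≤ t ^ (-α) * (2:ℝ)^α := by
        exact mul_le_mul_of_nonneg_left hb htp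
    _ = (2:ℝ)^α * t^(-α) := mul_comm _ _

include h0 h1 in
lemma beta_half :
    ∫ t in Ioo (0:ℝ) (1/2), t ^ (-α) * (1-t) ^ (-α)
      = 1/2 * (Real.Gamma (1-α) * Real.Gamma (1-α) / Real.Gamma ((1-α)+(1-α))) := by
  set ψ : ℝ → ℝ := fun t => t ^ (-α) * (1-t) ^ (-α) with hψ
  have hre : (0:ℝ) < 1 - α := by linarith
  have hi1 : IntervalIntegrable ψ volume 0 (1/2) := by
    rw [intervalIntegrable_iff_integrableOn_Ioc_of_le (by norm_num : (0:ℝ) ≤ 1/2),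
      integrableOn_Ioc_iff_integrableOn_Ioo]
    exact integrableOn_psi2 h0 h1
  have hi2 : IntervalIntegrable ψ volume (1/2) 1 := by
    have h := hi1.comp_sub_left 1
    simp only [hψ, sub_sub_cancel] at h
    norm_num at h
    have e : (fun x : ℝ => (1-x) ^ (-α) * x ^ (-α)) = fun x : ℝ => x ^ (-α) * (1-x) ^ (-α) :=
      funext fun x => mul_comm _ _
    rw [e] at h
    exact h.symm
  have hJ2 : (∫ x in (1/2:ℝ)..1, ψ x) = ∫ x in (0:ℝ)..(1/2), ψ x := by
    have e : ∀ x : ℝ, ψ x = ψ (1 - x) := by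
      intro x; simp only [hψ, sub_sub_cancel]; ring
    calc (∫ x in (1/2:ℝ)..1, ψ x) = ∫ x in (1/2:ℝ)..1, ψ (1 - x) := by
          refine intervalIntegral.integral_congr (fun x _ => e x)
      _ = ∫ x in (1 - 1 : ℝ)..(1 - 1/2 : ℝ), ψ x := intervalIntegral.integral_comp_sub_left ψ 1
      _ = ∫ x in (0:ℝ)..(1/2), ψ x := by norm_num
  have hfull : (∫ x in (0:ℝ)..1, ψ x) = 2 * ∫ x in (0:ℝ)..(1/2), ψ x := by
    rw [← intervalIntegral.integral_add_adjacent_intervals hi1 hi2, hJ2]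
    ring
  set u : ℂ := ((1-α : ℝ) : ℂ) with hu
  have hure : 0 < u.re := by rw [hu, Complex.ofReal_re]; exact hre
  have hβ := Complex.Gamma_mul_Gamma_eq_betaIntegral hure hure
  have htrans : Complex.betaIntegral u u = ((∫ x in (0:ℝ)..1, ψ x : ℝ) : ℂ) := by
    rw [Complex.betaIntegral, ← intervalIntegral.integral_ofReal]
    refine intervalIntegral.integral_congr (fun x hx => ?_)
    rw [uIcc_of_le (by norm_num : (0:ℝ) ≤ 1)] at hx
    have hx0 : 0 ≤ x := hx.1
    have hx1 : 0 ≤ 1 - x := by linarith [hx.2]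
    have he : u - 1 = ((-α : ℝ) : ℂ) := by
      rw [hu]; push_cast; ring
    rw [hψ, he, show ((1:ℂ) - (x:ℂ)) = (((1 - x : ℝ)):ℂ) by push_cast; ring,
      ← Complex.ofReal_cpow hx0, ← Complex.ofReal_cpow hx1]
    norm_cast
  have hΓu : Complex.Gamma u = ((Real.Gamma (1-α) : ℝ) : ℂ) := by
    rw [hu, Complex.Gamma_ofReal]
  have huu : u + u = (((1-α) + (1-α) : ℝ) : ℂ) := by rw [hu]; push_cast; ring
  have hΓuu : Complex.Gamma (u + u) = ((Real.Gamma ((1-α)+(1-α)) : ℝ) : ℂ) := by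
    rw [huu, Complex.Gamma_ofReal]
  rw [htrans, hΓu, hΓuu] at hβ
  have hreal : Real.Gamma (1-α) * Real.Gamma (1-α)
      = Real.Gamma ((1-α)+(1-α)) * ∫ x in (0:ℝ)..1, ψ x := by
    have := hβ
    rw [← Complex.ofReal_mul, ← Complex.ofReal_mul] at this
    exact_mod_cast this
  have hΓpos : 0 < Real.Gamma ((1-α)+(1-α)) := Real.Gamma_pos_of_pos (by linarith)
  have hIoo : (∫ t in Ioo (0:ℝ) (1/2), ψ t) = ∫ x in (0:ℝ)..(1/2), ψ x := by
    rw [intervalIntegral.integral_of_le (by norm_num : (0:ℝ) ≤ 1/2),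
      MeasureTheory.integral_Ioc_eq_integral_Ioo]
  rw [hIoo]
  have h2 : (∫ x in (0:ℝ)..(1/2), ψ x) = (∫ x in (0:ℝ)..1, ψ x) / 2 := by
    rw [hfull]; ring
  have h3 : (∫ x in (0:ℝ)..1, ψ x)
      = Real.Gamma (1-α) * Real.Gamma (1-α) / Real.Gamma ((1-α)+(1-α)) := by
    rw [eq_div_iff hΓpos.ne']; linarith [hreal]
  rw [h2, h3]
  ring

end Beta


section FTC
variable {α : ℝ} (h0 : 0 < α) (h1 : α < 1)





include h0 h1 in
lemma hasDerivAt_H {t : ℝ} (ht : t ∈ Ioo (0:ℝ) 1) :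
    HasDerivAt (fun y : ℝ => (y ^ (-α) - y ^ (-α) * (1-y) ^ (1-α)) / α)
      (t ^ (-α-1) * ((1-t) ^ (-α) - 1) + ((1-2*α)/α) * (t ^ (-α) * (1-t) ^ (-α))) t := by
  obtain ⟨ht0, ht1⟩ := ht
  have h1t : (0:ℝ) < 1 - t := by linarith
  have ha : HasDerivAt (fun y : ℝ => y ^ (-α)) (-α * t ^ (-α-1)) t :=
    Real.hasDerivAt_rpow_const (x := t) (p := -α) (Or.inl ht0.ne')
  have hsub : HasDerivAt (fun y : ℝ => 1 - y) (-1) t := (hasDerivAt_id t).const_sub 1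
  have hb : HasDerivAt (fun y : ℝ => (1-y) ^ (1-α)) (((1-α) * (1-t) ^ (-α)) * (-1)) t := by
    have h := Real.hasDerivAt_rpow_const (x := 1-t) (p := 1-α) (Or.inl h1t.ne')
    have := h.comp t hsub
    rw [show (1:ℝ) - α - 1 = -α by ring] at this
    exact this
  have hprod := ha.mul hb
  have hc := (ha.sub hprod).div_const α
  refine hc.congr_deriv ?_
  have e1 : t ^ (-α) = t ^ (-α-1) * t := by
    rw [← Real.rpow_add_one ht0.ne' (-α-1)]; congr 1; ring
  have e2 : (1-t) ^ (1-α) = (1-t) ^ (-α) * (1-t) := by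
    rw [← Real.rpow_add_one h1t.ne' (-α)]; congr 1; ring
  rw [e1, e2]
  field_simp
  ring

include h0 h1 in
lemma H_bounds {t : ℝ} (ht : t ∈ Ioo (0:ℝ) 1) :
    0 ≤ (t ^ (-α) - t ^ (-α) * (1-t) ^ (1-α)) / α
      ∧ (t ^ (-α) - t ^ (-α) * (1-t) ^ (1-α)) / α ≤ t ^ (1-α) / α := by
  obtain ⟨ht0, ht1⟩ := ht
  have h1t : (0:ℝ) < 1 - t := by linarith
  have htp : (0:ℝ) ≤ t ^ (-α) := Real.rpow_nonneg ht0.le _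
  constructor
  · have hle1 : (1-t) ^ (1-α) ≤ 1 := Real.rpow_le_one h1t.le (by linarith) (by linarith)
    have : t ^ (-α) * (1-t) ^ (1-α) ≤ t ^ (-α) * 1 := mul_le_mul_of_nonneg_left hle1 htp
    apply div_nonneg _ h0.le
    nlinarith
  · have hkey : 1 - t ≤ (1-t) ^ (1-α) := by
      have := Real.rpow_le_rpow_of_exponent_ge h1t (by linarith : 1 - t ≤ 1)
        (by linarith : 1 - α ≤ 1)
      rwa [Real.rpow_one] at this
    have hmul : t ^ (-α) * (1 - (1-t) ^ (1-α)) ≤ t ^ (-α) * t := by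
      apply mul_le_mul_of_nonneg_left _ htp
      linarith
    have e1 : t ^ (-α) * t = t ^ (1-α) := by
      rw [← Real.rpow_add_one ht0.ne' (-α)]; congr 1; ring
    apply (div_le_div_iff_of_pos_right h0).mpr
    nlinarith

end FTC

section FTC2
variable {α : ℝ} (h0 : 0 < α) (h1 : α < 1)

include h0 h1 in
lemma integrableOn_psi1 :
    IntegrableOn (fun t : ℝ => t ^ (-α-1) * ((1-t) ^ (-α) - 1)) (Ioo (0:ℝ) (1/2)) := by
  have hdom : IntegrableOn (fun t : ℝ => (2:ℝ) * t ^ (-α)) (Ioo (0:ℝ) (1/2)) :=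
    (integrableOn_rpow_Ioo (by linarith)).const_mul _
  have hcont : ContinuousOn (fun t : ℝ => t ^ (-α-1) * ((1-t) ^ (-α) - 1)) (Ioo (0:ℝ) (1/2)) := by
    apply ContinuousOn.mul
    · exact continuousOn_id.rpow_const (fun t ht => Or.inl (ne_of_gt ht.1))
    · apply ContinuousOn.sub _ continuousOn_const
      exact (continuousOn_const.sub continuousOn_id).rpow_const
        (fun t ht => Or.inl (by have := ht.2; norm_num; linarith))
  refine Integrable.mono hdom (hcont.aestronglyMeasurable measurableSet_Ioo) ?_
  filter_upwards [MeasureTheory.ae_restrict_mem measurableSet_Ioo] with t ht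
  have ht0 := ht.1
  have ht2 := ht.2
  have h1t : (0:ℝ) < 1 - t := by linarith
  have hge1 : (1:ℝ) ≤ (1-t) ^ (-α) :=
    Real.one_le_rpow_of_pos_of_le_one_of_nonpos h1t (by linarith) (by linarith)
  have hub : (1-t) ^ (-α) ≤ (1-t)⁻¹ := by
    have := Real.rpow_le_rpow_of_exponent_ge h1t (by linarith : 1 - t ≤ 1)
      (by linarith : -1 ≤ -α)
    rwa [Real.rpow_neg_one] at this
  have hinv : (1-t)⁻¹ - 1 ≤ 2 * t := by
    rw [inv_eq_one_div, div_sub' h1t.ne']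
    rw [div_le_iff₀ h1t]
    nlinarith
  have htp : (0:ℝ) ≤ t ^ (-α-1) := Real.rpow_nonneg ht0.le _
  have e1 : t ^ (-α-1) * t = t ^ (-α) := by
    rw [← Real.rpow_add_one ht0.ne' (-α-1)]; congr 1; ring
  rw [Real.norm_eq_abs, Real.norm_eq_abs,
    abs_of_nonneg (by positivity : (0:ℝ) ≤ (2:ℝ) * t ^ (-α)),
    abs_of_nonneg (mul_nonneg htp (by linarith))]
  calc t ^ (-α-1) * ((1-t) ^ (-α) - 1) ≤ t ^ (-α-1) * (2*t) := by
        apply mul_le_mul_of_nonneg_left _ htp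
        linarith
    _ = 2 * (t ^ (-α-1) * t) := by ring
    _ = 2 * t ^ (-α) := by rw [e1]

include h0 h1 in
lemma integral_phi :
    ∫ t in Ioo (0:ℝ) (1/2),
        (t ^ (-α-1) * ((1-t) ^ (-α) - 1) + ((1-2*α)/α) * (t ^ (-α) * (1-t) ^ (-α)))
      = ((1/2:ℝ) ^ (-α) - (1/2:ℝ) ^ (-α) * (1/2:ℝ) ^ (1-α)) / α := by
  set φ : ℝ → ℝ := fun t =>
    t ^ (-α-1) * ((1-t) ^ (-α) - 1) + ((1-2*α)/α) * (t ^ (-α) * (1-t) ^ (-α)) with hφ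
  set H : ℝ → ℝ := fun y => (y ^ (-α) - y ^ (-α) * (1-y) ^ (1-α)) / α with hH
  have hIφ : IntegrableOn φ (Ioo (0:ℝ) (1/2)) :=
    (integrableOn_psi1 h0 h1).add ((integrableOn_psi2 h0 h1).const_mul _)
  set s : ℕ → Set ℝ := fun n => Ioo ((1/4:ℝ)/(n+1)) (1/2) with hs
  have hεpos : ∀ n : ℕ, (0:ℝ) < (1/4:ℝ)/(n+1) := fun n => by positivity
  have hεlt : ∀ n : ℕ, (1/4:ℝ)/(n+1) < 1/2 := by
    intro n
    rw [div_lt_iff₀ (by positivity : (0:ℝ) < (n:ℝ)+1)]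
    have : (1:ℝ) ≤ (n:ℝ) + 1 := by linarith [Nat.cast_nonneg (α := ℝ) n]
    nlinarith
  have hmono : Monotone s := by
    intro m n hmn
    apply Ioo_subset_Ioo _ le_rfl
    apply div_le_div_of_nonneg_left (by norm_num) (by positivity)
    have hc := (Nat.cast_le (α := ℝ)).mpr hmn
    linarith
  have hunion : (⋃ n, s n) = Ioo (0:ℝ) (1/2) := by
    ext x
    simp only [mem_iUnion, mem_Ioo, hs]
    constructor
    · rintro ⟨n, h1', h2'⟩
      exact ⟨lt_trans (hεpos n) h1', h2'⟩
    · rintro ⟨hx0, hx2⟩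
      obtain ⟨n, hn⟩ := exists_nat_gt ((1/4:ℝ)/x)
      refine ⟨n, ?_, hx2⟩
      rw [div_lt_iff₀ (by positivity : (0:ℝ) < (n:ℝ)+1)]
      rw [div_lt_iff₀ hx0] at hn
      nlinarith [Nat.cast_nonneg (α := ℝ) n]
  have htend := MeasureTheory.tendsto_setIntegral_of_monotone
    (fun n => measurableSet_Ioo) hmono (hunion ▸ hIφ)
  rw [hunion] at htend
  have heval : ∀ n : ℕ, (∫ t in s n, φ t) = H (1/2) - H ((1/4:ℝ)/(n+1)) := by
    intro n
    have hle : (1/4:ℝ)/(n+1) ≤ 1/2 := (hεlt n).le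
    rw [hs]
    rw [← MeasureTheory.integral_Ioc_eq_integral_Ioo,
      ← intervalIntegral.integral_of_le hle]
    refine intervalIntegral.integral_eq_sub_of_hasDerivAt (fun t ht' => ?_) ?_
    · rw [uIcc_of_le hle] at ht'
      exact hasDerivAt_H h0 h1 ⟨lt_of_lt_of_le (hεpos n) ht'.1,
        lt_of_le_of_lt ht'.2 (by norm_num)⟩
    · rw [intervalIntegrable_iff_integrableOn_Ioc_of_le hle,
        integrableOn_Ioc_iff_integrableOn_Ioo]
      exact hIφ.mono_set (Ioo_subset_Ioo (hεpos n).le le_rfl)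
  have hHlim : Tendsto (fun n : ℕ => H ((1/4:ℝ)/(n+1))) atTop (𝓝 0) := by
    have hεtend : Tendsto (fun n : ℕ => (1/4:ℝ)/(n+1)) atTop (𝓝 0) := by
      have := tendsto_one_div_add_atTop_nhds_zero_nat (𝕜 := ℝ)
      have h4 := this.const_mul (1/4:ℝ)
      simpa [div_eq_mul_inv, mul_comm] using h4
    have hup : Tendsto (fun n : ℕ => ((1/4:ℝ)/(n+1)) ^ (1-α) / α) atTop (𝓝 0) := by
      have hc : ContinuousAt (fun x : ℝ => x ^ (1-α)) 0 :=
        Real.continuousAt_rpow_const 0 (1-α) (Or.inr (by linarith))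
      have hcomp := (hc.tendsto).comp hεtend
      simp only [Function.comp_def] at hcomp
      rw [Real.zero_rpow (by intro h; linarith [h] : (1:ℝ)-α ≠ 0)] at hcomp
      have := hcomp.div_const α
      simpa using this
    refine tendsto_of_tendsto_of_tendsto_of_le_of_le (tendsto_const_nhds) hup
      (fun n => (H_bounds h0 h1 ⟨hεpos n, lt_trans (hεlt n) (by norm_num)⟩).1)
      (fun n => (H_bounds h0 h1 ⟨hεpos n, lt_trans (hεlt n) (by norm_num)⟩).2)
  have := htend
  rw [Filter.tendsto_congr heval] at this
  have hlim2 : Tendsto (fun n : ℕ => H (1/2) - H ((1/4:ℝ)/(n+1))) atTop (𝓝 (H (1/2))) := by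
    have := (tendsto_const_nhds (x := H (1/2)) (f := atTop (α := ℕ))).sub hHlim
    simpa using this
  have hfin := tendsto_nhds_unique this hlim2
  rw [hfin, hH]
  norm_num

end FTC2

/-- For every `α ∈ (0,1)` with `α ≠ 1/2`, the series
`∑_{j=0}^∞ (Γ(α+j)/(2^j Γ(α) Γ(j+1))) · (α/(j-α))` converges and equals
`−2^{-α-1}(1-2α) B(1-α,1-α) − 2^{α-1}`, where `B(a,b) = Γ(a)Γ(b)/Γ(a+b)`. -/
theorem stmt1 (α : ℝ) (hα : α ∈ Set.Ioo (0:ℝ) 1) (hne : α ≠ 1/2) :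
    HasSum
      (fun j : ℕ =>
        Real.Gamma (α + j) / (2 ^ j * Real.Gamma α * Real.Gamma (j + 1)) * (α / (j - α)))
      (-(2:ℝ) ^ (-α - 1) * (1 - 2 * α) *
          (Real.Gamma (1 - α) * Real.Gamma (1 - α) / Real.Gamma ((1 - α) + (1 - α))) -
        2 ^ (α - 1)) := by
  obtain ⟨h0, h1⟩ := hα
  have hsum : Summable (mm α) := summable_mm h0 h1
  have hα' : α ≠ 0 := h0.ne'
  set B : ℝ := Real.Gamma (1 - α) * Real.Gamma (1 - α) / Real.Gamma ((1 - α) + (1 - α)) with hB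
  suffices h : (∑' j : ℕ, mm α j)
      = -(2:ℝ) ^ (-α - 1) * (1 - 2 * α) * B - 2 ^ (α - 1) by
    have hh := hsum.hasSum
    rw [h] at hh
    exact hh
  rw [hsum.tsum_eq_zero_add, mm_zero h0, tail_eq_integral h0 h1]
  have hmulint : (∫ t in Set.Ioo (0:ℝ) (1/2), α * t ^ (-α-1) * ((1-t) ^ (-α) - 1))
      = α * ∫ t in Set.Ioo (0:ℝ) (1/2), t ^ (-α-1) * ((1-t) ^ (-α) - 1) := by
    rw [← MeasureTheory.integral_const_mul]
    simp only [mul_assoc]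
  have hpsi1 : (∫ t in Set.Ioo (0:ℝ) (1/2), t ^ (-α-1) * ((1-t) ^ (-α) - 1))
      = ((1/2:ℝ) ^ (-α) - (1/2:ℝ) ^ (-α) * (1/2:ℝ) ^ (1-α)) / α
        - ((1-2*α)/α) * ∫ t in Set.Ioo (0:ℝ) (1/2), t ^ (-α) * (1-t) ^ (-α) := by
    have hadd := MeasureTheory.integral_add (μ := MeasureTheory.volume.restrict (Set.Ioo (0:ℝ) (1/2)))
      (integrableOn_psi1 h0 h1) ((integrableOn_psi2 h0 h1).const_mul ((1-2*α)/α))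
    have hphi := integral_phi h0 h1
    rw [hadd] at hphi
    have hc : (∫ t in Set.Ioo (0:ℝ) (1/2), (1-2*α)/α * (t ^ (-α) * (1-t) ^ (-α)))
        = ((1-2*α)/α) * ∫ t in Set.Ioo (0:ℝ) (1/2), t ^ (-α) * (1-t) ^ (-α) :=
      MeasureTheory.integral_const_mul _ _
    rw [hc] at hphi
    linarith
  rw [hmulint, hpsi1, beta_half h0 h1, ← hB]
  have f1 : (1/2:ℝ) ^ (-α) = (2:ℝ) ^ α := by
    rw [one_div, Real.inv_rpow (by norm_num : (0:ℝ) ≤ 2),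
      ← Real.rpow_neg (by norm_num : (0:ℝ) ≤ 2), neg_neg]
  have f2 : (1/2:ℝ) ^ (1-α) = (2:ℝ) ^ (α-1) := by
    rw [one_div, Real.inv_rpow (by norm_num : (0:ℝ) ≤ 2),
      ← Real.rpow_neg (by norm_num : (0:ℝ) ≤ 2)]
    congr 1; ring
  have f3 : (2:ℝ) ^ (-α) * (2:ℝ) ^ α = 1 := by
    rw [← Real.rpow_add two_pos]
    norm_num
  have f5 : (2:ℝ) ^ (-α) * (1/2:ℝ) = (2:ℝ) ^ (-α-1) := by
    rw [show (1/2:ℝ) = (2:ℝ) ^ (-1:ℝ) by rw [Real.rpow_neg_one]; norm_num,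
      ← Real.rpow_add two_pos]
    ring_nf
  rw [f1, f2]
  have e : α * (((2:ℝ)^α - (2:ℝ)^α * (2:ℝ)^(α-1)) / α - ((1-2*α)/α) * (1/2 * B))
      = ((2:ℝ)^α - (2:ℝ)^α * (2:ℝ)^(α-1)) - (1-2*α) * (1/2 * B) := by
    field_simp
  rw [e]
  linear_combination (1 - (2:ℝ)^(α-1)) * f3 - (1-2*α) * B * f5
end

section
/- Let F be a distribution function on (0,∞) whose survival function 1−F is regularly varying at infinity with index −α for some α > 0, and let X₁,…,Xₙ (n ≥ 2) be i.i.d. with distribution F. Let c = (1, c₂, …, cₙ) with c₂ > 0 and cᵢ ≥ 0 for i ≥ 3, and set Sₙ(c) = c₁X_{n,n} + ⋯ + cₙX_{1,n} where X_{1,n} ≤ ⋯ ≤ X_{n,n} are the order statistics, and c̃ = c₂/(1+c₂). Then P(Sₙ(c) > x, X_{n,n} ≤ x − c̃x) = o((1−F(x))²) as x → ∞. -/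
open Filter MeasureTheory ProbabilityTheory Real Set
open scoped ENNReal

/-- The `L`-statistics `Sₙ(c) = c₁ X_{n,n} + c₂ X_{n-1,n} + ⋯ + cₙ X_{1,n}`:
`c i` multiplies the `(i+1)`-th largest value among `Y 0, …, Y (n-1)`. -/
noncomputable def Lstat {n : ℕ} (c : Fin n → ℝ) (Y : Fin n → ℝ) : ℝ :=
  ∑ i : Fin n, c i * (Y ∘ Tuple.sort Y) i.rev

lemma det_aux {m : ℕ} (c Y : Fin (m+2) → ℝ) (hc0 : c 0 = 1) (hc1 : 0 < c 1)
    (hcnn : ∀ i, 0 ≤ c i) (x ε b K : ℝ) (hx : 0 < x) (hε : 0 < ε)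
    (hb : b = 1/(1 + c 1)) (hK : K = ∑ i, c i)
    (hL : x < Lstat c Y) (hM : ∀ i, Y i ≤ x * b) :
    (∃ i j, i ≠ j ∧ x * (b - K*ε/(c 1)) < Y i ∧ x * (b - K*ε/(c 1)) < Y j) ∨
    (∃ i j k, i ≠ j ∧ i ≠ k ∧ j ≠ k ∧ x * ε < Y i ∧ x * ε < Y j ∧ x * ε < Y k) := by
  set σ := Tuple.sort Y with hσ
  have hmono : Monotone (Y ∘ σ) := Tuple.monotone_sort Y
  by_cases hB : ∃ i j k, i ≠ j ∧ i ≠ k ∧ j ≠ k ∧ x * ε < Y i ∧ x * ε < Y j ∧ x * ε < Y k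
  · exact Or.inr hB
  left
  have h1c : (1 : ℝ) + c 1 > 0 := by linarith
  have htail : ∀ i : Fin (m+2), 2 ≤ (i : ℕ) → (Y ∘ σ) i.rev ≤ x * ε := by
    intro i hi
    by_contra h
    push_neg at h
    apply hB
    have h10 : (1 : Fin (m+2)) ≤ i := by
      rw [Fin.le_def]; simpa using by omega
    have h01 : (0 : Fin (m+2)) < 1 := by
      rw [Fin.lt_def]; simp
    have hr1 : i.rev ≤ (1 : Fin (m+2)).rev := Fin.rev_le_rev.2 h10
    have hr0 : (1 : Fin (m+2)).rev ≤ (0 : Fin (m+2)).rev := Fin.rev_le_rev.2 h01.le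
    refine ⟨σ i.rev, σ (1 : Fin (m+2)).rev, σ (0 : Fin (m+2)).rev, ?_, ?_, ?_, h, ?_, ?_⟩
    · exact σ.injective.ne (Fin.rev_injective.ne (by rw [Fin.ne_iff_vne]; simpa using by omega))
    · exact σ.injective.ne (Fin.rev_injective.ne (by rw [Fin.ne_iff_vne]; simpa using by omega))
    · exact σ.injective.ne (Fin.rev_injective.ne (by rw [Fin.ne_iff_vne]; simp))
    · exact lt_of_lt_of_le h (hmono hr1)
    · exact lt_of_lt_of_le h ((hmono hr1).trans (hmono hr0))
  have hsum : Lstat c Y = c 0 * (Y ∘ σ) (Fin.rev 0) + c 1 * (Y ∘ σ) (Fin.rev 1)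
      + ∑ i : Fin m, c i.succ.succ * (Y ∘ σ) (Fin.rev i.succ.succ) := by
    rw [Lstat, Fin.sum_univ_succ, Fin.sum_univ_succ, ← hσ, Fin.succ_zero_eq_one]
    ring
  have ht1 : (Y ∘ σ) (Fin.rev 0) ≤ x * b := hM _
  have htailsum : ∑ i : Fin m, c i.succ.succ * (Y ∘ σ) (Fin.rev i.succ.succ) ≤ K * (x * ε) := by
    have h1 : ∑ i : Fin m, c i.succ.succ * (Y ∘ σ) (Fin.rev i.succ.succ)
        ≤ ∑ i : Fin m, c i.succ.succ * (x * ε) := by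
      refine Finset.sum_le_sum fun i _ => ?_
      exact mul_le_mul_of_nonneg_left (htail _ (by simp)) (hcnn _)
    have h2 : ∑ i : Fin m, c i.succ.succ * (x * ε) = (∑ i : Fin m, c i.succ.succ) * (x * ε) := by
      rw [Finset.sum_mul]
    have h3 : (∑ i : Fin m, c i.succ.succ) ≤ K := by
      have : K = c 0 + c 1 + ∑ i : Fin m, c i.succ.succ := by
        rw [hK, Fin.sum_univ_succ, Fin.sum_univ_succ, Fin.succ_zero_eq_one]; ring
      rw [this]
      have := hcnn 0; have := hcnn 1
      linarith
    calc ∑ i : Fin m, c i.succ.succ * (Y ∘ σ) (Fin.rev i.succ.succ)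
        ≤ (∑ i : Fin m, c i.succ.succ) * (x * ε) := by rw [← h2]; exact h1
      _ ≤ K * (x * ε) := mul_le_mul_of_nonneg_right h3 (by positivity)
  have hZ1 : x * (b - K*ε/(c 1)) < (Y ∘ σ) (Fin.rev 1) := by
    have hgt : c 1 * (Y ∘ σ) (Fin.rev 1) > x - x * b - K * (x * ε) := by
      rw [hsum] at hL; rw [hc0] at hL; nlinarith [hL]
    have key : x * (b - K*ε/(c 1)) * (c 1) = x - x * b - K * (x * ε) := by
      rw [hb]; field_simp; ring
    nlinarith [hgt]
  refine ⟨σ (Fin.rev 0), σ (Fin.rev 1), ?_, ?_, hZ1⟩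
  · refine σ.injective.ne (Fin.rev_injective.ne ?_)
    rw [Fin.ne_iff_vne]; simp
  · refine lt_of_lt_of_le hZ1 (hmono ?_)
    exact Fin.rev_le_rev.2 (by rw [Fin.le_def]; simp)

lemma prob_bound {Ω : Type*} [MeasureSpace Ω] [IsProbabilityMeasure (ℙ : Measure Ω)]
    {n : ℕ} (X : Fin n → Ω → ℝ)
    (hindep : iIndepFun X ℙ)
    (E : Set Ω) (u v w q r : ℝ) (hq0 : 0 ≤ q) (hr0 : 0 ≤ r)
    (hq : ∀ i, ℙ (X i ⁻¹' Set.Ioc u v) = ENNReal.ofReal q)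
    (hr : ∀ i, ℙ (X i ⁻¹' Set.Ioi w) = ENNReal.ofReal r)
    (hE : ∀ ω ∈ E, (∃ i j : Fin n, i ≠ j ∧ X i ω ∈ Set.Ioc u v ∧ X j ω ∈ Set.Ioc u v) ∨
      (∃ i j k : Fin n, i ≠ j ∧ i ≠ k ∧ j ≠ k ∧
        X i ω ∈ Set.Ioi w ∧ X j ω ∈ Set.Ioi w ∧ X k ω ∈ Set.Ioi w)) :
    (ℙ E).toReal ≤ n^2 * q^2 + n^3 * r^3 := by
  classical
  set A : Fin n → Set Ω := fun i => X i ⁻¹' Set.Ioc u v with hA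
  set B : Fin n → Set Ω := fun i => X i ⁻¹' Set.Ioi w with hB
  have hpair : ∀ i j : Fin n, i ≠ j → ℙ (A i ∩ A j) = ENNReal.ofReal q * ENNReal.ofReal q := by
    intro i j hij
    have h := hindep.measure_inter_preimage_eq_mul {i, j} (sets := fun _ => Set.Ioc u v)
      (fun _ _ => measurableSet_Ioc)
    rw [Finset.set_biInter_insert, Finset.set_biInter_singleton,
      Finset.prod_insert (by simpa using hij), Finset.prod_singleton] at h
    rw [hA]; rw [h, hq i, hq j]
  have htriple : ∀ i j k : Fin n, i ≠ j → i ≠ k → j ≠ k →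
      ℙ (B i ∩ (B j ∩ B k)) = ENNReal.ofReal r * (ENNReal.ofReal r * ENNReal.ofReal r) := by
    intro i j k hij hik hjk
    have h := hindep.measure_inter_preimage_eq_mul {i, j, k} (sets := fun _ => Set.Ioi w)
      (fun _ _ => measurableSet_Ioi)
    rw [Finset.set_biInter_insert, Finset.set_biInter_insert, Finset.set_biInter_singleton,
      Finset.prod_insert (by simp [hij, hik]), Finset.prod_insert (by simpa using hjk),
      Finset.prod_singleton] at h
    rw [hB]; rw [h, hr i, hr j, hr k]
  set S1 : Fin n × Fin n → Set Ω := fun p => if p.1 ≠ p.2 then A p.1 ∩ A p.2 else ∅ with hS1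
  set S2 : Fin n × Fin n × Fin n → Set Ω :=
    fun t => if t.1 ≠ t.2.1 ∧ t.1 ≠ t.2.2 ∧ t.2.1 ≠ t.2.2
      then B t.1 ∩ (B t.2.1 ∩ B t.2.2) else ∅ with hS2
  have hsub : E ⊆ (⋃ p, S1 p) ∪ (⋃ t, S2 t) := by
    intro ω hω
    rcases hE ω hω with ⟨i, j, hij, hi, hj⟩ | ⟨i, j, k, hij, hik, hjk, hi, hj, hk⟩
    · left
      refine Set.mem_iUnion.2 ⟨(i, j), ?_⟩
      rw [hS1]; simp only [if_pos hij]
      exact ⟨hi, hj⟩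
    · right
      have hmem : ω ∈ S2 (i, j, k) := by
        rw [hS2]
        simp only
        rw [if_pos ⟨hij, hik, hjk⟩]
        exact ⟨hi, hj, hk⟩
      exact Set.mem_iUnion.2 ⟨_, hmem⟩
  have h1 : ℙ (⋃ p, S1 p) ≤ (n : ℝ≥0∞)^2 * ENNReal.ofReal q ^ 2 := by
    refine (measure_iUnion_fintype_le _ _).trans ?_
    have hterm : ∀ p : Fin n × Fin n, ℙ (S1 p) ≤ ENNReal.ofReal q ^ 2 := by
      intro p
      rw [hS1]
      by_cases h : p.1 ≠ p.2
      · simp only [if_pos h]; rw [hpair _ _ h, sq]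
      · simp [if_neg h]
    refine (Finset.sum_le_sum fun p _ => hterm p).trans ?_
    rw [Finset.sum_const, Finset.card_univ]
    simp [Fintype.card_prod, Fintype.card_fin, mul_comm, pow_two, mul_assoc]
  have h2 : ℙ (⋃ t, S2 t) ≤ (n : ℝ≥0∞)^3 * ENNReal.ofReal r ^ 3 := by
    refine (measure_iUnion_fintype_le _ _).trans ?_
    have hterm : ∀ t : Fin n × Fin n × Fin n, ℙ (S2 t) ≤ ENNReal.ofReal r ^ 3 := by
      intro t
      rw [hS2]
      by_cases h : t.1 ≠ t.2.1 ∧ t.1 ≠ t.2.2 ∧ t.2.1 ≠ t.2.2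
      · simp only [if_pos h]; rw [htriple _ _ _ h.1 h.2.1 h.2.2]; ring_nf; rfl
      · simp [if_neg h]
    refine (Finset.sum_le_sum fun t _ => hterm t).trans ?_
    rw [Finset.sum_const, Finset.card_univ]
    simp [Fintype.card_prod, Fintype.card_fin, pow_succ, pow_two, mul_comm, mul_assoc]
  have hEbound : ℙ E ≤ ENNReal.ofReal ((n:ℝ)^2 * q^2 + (n:ℝ)^3 * r^3) := by
    have heq : ENNReal.ofReal ((n:ℝ)^2 * q^2 + (n:ℝ)^3 * r^3)
        = (n : ℝ≥0∞)^2 * ENNReal.ofReal q ^ 2 + (n : ℝ≥0∞)^3 * ENNReal.ofReal r ^ 3 := by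
      rw [ENNReal.ofReal_add (by positivity) (by positivity),
        ENNReal.ofReal_mul (by positivity), ENNReal.ofReal_mul (by positivity),
        ENNReal.ofReal_pow hq0, ENNReal.ofReal_pow hr0,
        ENNReal.ofReal_pow (by positivity), ENNReal.ofReal_pow (by positivity),
        ENNReal.ofReal_natCast]
    calc ℙ E ≤ ℙ ((⋃ p, S1 p) ∪ (⋃ t, S2 t)) := measure_mono hsub
      _ ≤ ℙ (⋃ p, S1 p) + ℙ (⋃ t, S2 t) := measure_union_le _ _
      _ ≤ (n : ℝ≥0∞)^2 * ENNReal.ofReal q ^ 2 + (n : ℝ≥0∞)^3 * ENNReal.ofReal r ^ 3 :=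
          add_le_add h1 h2
      _ = ENNReal.ofReal ((n:ℝ)^2 * q^2 + (n:ℝ)^3 * r^3) := heq.symm
  exact ENNReal.toReal_le_of_le_ofReal (by positivity) hEbound

/-- If `X₁, …, Xₙ` (`n ≥ 2`) are i.i.d. positive random variables with common distribution
function `F` whose survival function `1 - F` is regularly varying at infinity with index `-α`
(`α > 0`), and `c = (1, c₂, …, cₙ)` with `c₂ > 0`, `cᵢ ≥ 0`, `c̃ = c₂/(1+c₂)`, then
`P(Sₙ(c) > x, X_{n,n} ≤ x − c̃x) = o((1−F(x))²)` as `x → ∞`. -/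
theorem stmt2 {Ω : Type*} [MeasureSpace Ω] [IsProbabilityMeasure (ℙ : Measure Ω)]
    (n : ℕ) (hn : 2 ≤ n) (α : ℝ) (hα : 0 < α) (F : ℝ → ℝ)
    (X : Fin n → Ω → ℝ) (hmeas : ∀ i, Measurable (X i))
    (hindep : iIndepFun X ℙ)
    (hpos : ∀ i, ∀ᵐ ω ∂(ℙ : Measure Ω), 0 < X i ω)
    (hdf : ∀ i x, (ℙ {ω | X i ω ≤ x}).toReal = F x)
    (hRV : ∀ y > (0:ℝ),
      Tendsto (fun t => (1 - F (t * y)) / (1 - F t)) atTop (nhds (y ^ (-α))))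
    (c : Fin n → ℝ) (hc0 : c ⟨0, by omega⟩ = 1) (hc1 : 0 < c ⟨1, by omega⟩)
    (hcnn : ∀ i, 0 ≤ c i) :
    (fun x => (ℙ {ω | Lstat c (fun i => X i ω) > x ∧
        (⨆ i, X i ω) ≤ x - (c ⟨1, by omega⟩ / (1 + c ⟨1, by omega⟩)) * x}).toReal)
      =o[atTop] fun x => (1 - F x) ^ 2 := by
  obtain ⟨m, rfl⟩ : ∃ m, n = m + 2 := ⟨n - 2, by omega⟩
  have hone : (⟨1, by omega⟩ : Fin (m+2)) = 1 := by ext; simp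
  have hzero : (⟨0, by omega⟩ : Fin (m+2)) = 0 := by ext; simp
  have hc0' : c 0 = 1 := by rw [← hzero]; exact hc0
  have hc1' : 0 < c 1 := by rw [← hone]; exact hc1
  -- basic facts about F
  have hFmono : Monotone F := by
    intro s t hst
    rw [← hdf 0 s, ← hdf 0 t]
    exact ENNReal.toReal_mono (measure_ne_top _ _)
      (measure_mono fun ω hω => le_trans hω hst)
  have hF0 : ∀ t, 0 ≤ F t := fun t => (hdf 0 t) ▸ ENNReal.toReal_nonneg
  have hFle1 : ∀ t, F t ≤ 1 := by
    intro t
    rw [← hdf 0 t]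
    exact ENNReal.toReal_le_of_le_ofReal zero_le_one (by simpa using prob_le_one)
  have hIic : ∀ (i : Fin (m+2)) t, ℙ (X i ⁻¹' Set.Iic t) = ENNReal.ofReal (F t) := by
    intro i t
    have hset : X i ⁻¹' Set.Iic t = {ω | X i ω ≤ t} := rfl
    rw [hset, ← hdf i t, ENNReal.ofReal_toReal (measure_ne_top _ _)]
  have hIoc : ∀ (i : Fin (m+2)) u v, u ≤ v →
      ℙ (X i ⁻¹' Set.Ioc u v) = ENNReal.ofReal (F v - F u) := by
    intro i u v huv
    rw [← Set.Iic_sdiff_Iic, Set.preimage_diff,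
      measure_diff (Set.preimage_mono (Set.Iic_subset_Iic.2 huv))
        ((hmeas i) measurableSet_Iic).nullMeasurableSet (measure_ne_top _ _),
      hIic, hIic, ENNReal.ofReal_sub _ (hF0 u)]
  have hIoi : ∀ (i : Fin (m+2)) t, ℙ (X i ⁻¹' Set.Ioi t) = ENNReal.ofReal (1 - F t) := by
    intro i t
    rw [← Set.compl_Iic, Set.preimage_compl, measure_compl ((hmeas i) measurableSet_Iic) (measure_ne_top _ _),
      measure_univ, hIic, ← ENNReal.ofReal_one, ← ENNReal.ofReal_sub _ (hF0 t)]
  -- survival function is positive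
  have hgpos : ∀ t, 0 < 1 - F t := by
    by_contra h
    push_neg at h
    obtain ⟨t₀, ht₀⟩ := h
    have hev : (fun t => (1 - F (t * 2)) / (1 - F t)) =ᶠ[atTop] fun _ => (0:ℝ) := by
      filter_upwards [eventually_ge_atTop (max t₀ 0)] with t ht
      have htt : t₀ ≤ t := le_trans (le_max_left t₀ 0) ht
      have ht0 : (0:ℝ) ≤ t := le_trans (le_max_right t₀ 0) ht
      have h1 : F t = 1 := le_antisymm (hFle1 t) (by have := hFmono htt; linarith)
      have h2 : F (t * 2) = 1 :=
        le_antisymm (hFle1 _) (by have := hFmono (show t₀ ≤ t * 2 by nlinarith); linarith)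
      rw [h1, h2]; simp
    have h0 : Tendsto (fun t => (1 - F (t * 2)) / (1 - F t)) atTop (nhds 0) :=
      Tendsto.congr' hev.symm tendsto_const_nhds
    have := tendsto_nhds_unique (hRV 2 two_pos) h0
    exact absurd this (ne_of_gt (Real.rpow_pos_of_pos two_pos _))
  -- survival function tends to 0
  have hg0 : Tendsto (fun t => 1 - F t) atTop (nhds 0) := by
    have hanti : Antitone fun t => 1 - F t := fun s t h =>
      sub_le_sub_left (hFmono h) 1
    have hbdd : BddBelow (Set.range fun t => 1 - F t) := by
      refine ⟨0, ?_⟩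
      rintro y ⟨t, rfl⟩
      exact (hgpos t).le
    have hlim := tendsto_atTop_ciInf hanti hbdd
    set L := ⨅ t : ℝ, (1 - F t) with hLdef
    by_cases hL0 : L = 0
    · rwa [hL0] at hlim
    · exfalso
      have hmul : Tendsto (fun t : ℝ => t * 2) atTop atTop :=
        Tendsto.atTop_mul_const two_pos tendsto_id
      have h2lim : Tendsto (fun t => 1 - F (t * 2)) atTop (nhds L) := hlim.comp hmul
      have hdiv : Tendsto (fun t => (1 - F (t * 2)) / (1 - F t)) atTop (nhds (L / L)) :=
        h2lim.div hlim hL0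
      have huniq := tendsto_nhds_unique (hRV 2 two_pos) hdiv
      rw [div_self hL0] at huniq
      have hlt : (2:ℝ) ^ (-α) < 1 :=
        Real.rpow_lt_one_of_one_lt_of_neg one_lt_two (by linarith)
      rw [huniq] at hlt
      exact lt_irrefl _ hlt
  -- main part
  rw [Asymptotics.isLittleO_iff]
  intro δ hδ
  have h1c : (0:ℝ) < 1 + c 1 := by linarith
  set b : ℝ := 1 / (1 + c 1) with hbdef
  have hbpos : 0 < b := by rw [hbdef]; positivity
  set K : ℝ := ∑ i, c i with hKdef
  have hKpos : 0 < K := by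
    have : c 0 ≤ K := Finset.single_le_sum (fun i _ => hcnn i) (Finset.mem_univ 0)
    rw [hc0'] at this; linarith
  set N : ℝ := ((m + 2 : ℕ) : ℝ) with hNdef
  -- choose ε
  obtain ⟨ε, hεpos, hapos, hφ⟩ : ∃ ε : ℝ, 0 < ε ∧ 0 < b - K * ε / (c 1) ∧
      N^2 * ((b - K * ε / (c 1)) ^ (-α) - b ^ (-α))^2 < δ := by
    have hψcont : ContinuousAt (fun e : ℝ => b - K * e / (c 1)) 0 := by fun_prop
    have hψ0 : (fun e : ℝ => b - K * e / (c 1)) 0 = b := by simp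
    have hψtend : Tendsto (fun e : ℝ => b - K * e / (c 1)) (nhds 0) (nhds b) := by
      simpa using hψcont.tendsto
    have hrpow : Tendsto (fun y : ℝ => y ^ (-α)) (nhds b) (nhds (b ^ (-α))) :=
      (Real.continuousAt_rpow_const b (-α) (Or.inl (ne_of_gt hbpos))).tendsto
    have htend : Tendsto (fun e : ℝ => N^2 * ((b - K * e / (c 1)) ^ (-α) - b ^ (-α))^2)
        (nhds 0) (nhds 0) := by
      have h3 : Tendsto (fun e : ℝ => (b - K * e / (c 1)) ^ (-α)) (nhds 0) (nhds (b ^ (-α))) :=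
        hrpow.comp hψtend
      have h4 : Tendsto (fun e : ℝ => N^2 * ((b - K * e / (c 1)) ^ (-α) - b ^ (-α))^2)
          (nhds 0) (nhds (N^2 * (b ^ (-α) - b ^ (-α))^2)) :=
        ((h3.sub tendsto_const_nhds).pow 2).const_mul (N^2)
      simpa using h4
    have hev1 := htend.eventually_lt_const hδ
    have hev2 := hψtend.eventually_const_lt hbpos
    obtain ⟨η, hη, hball⟩ := Metric.eventually_nhds_iff.mp (hev1.and hev2)
    refine ⟨η/2, by positivity, ?_, ?_⟩
    · exact (hball (by rw [Real.dist_eq]; rw [sub_zero, abs_of_pos (by positivity)]; linarith)).2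
    · exact (hball (by rw [Real.dist_eq]; rw [sub_zero, abs_of_pos (by positivity)]; linarith)).1
  set a : ℝ := b - K * ε / (c 1) with hadef
  have hab : a ≤ b := by
    have : 0 < K * ε / (c 1) := by positivity
    rw [hadef]; linarith
  -- convergence of the ratio
  have hq_t : Tendsto (fun x => (F (x * b) - F (x * a)) / (1 - F x)) atTop
      (nhds (a ^ (-α) - b ^ (-α))) := by
    have h := (hRV a hapos).sub (hRV b hbpos)
    refine h.congr fun x => ?_
    rw [div_sub_div_same]
    ring_nf
  have hr_t := hRV ε hεpos
  have hr0_t : Tendsto (fun x => 1 - F (x * ε)) atTop (nhds 0) :=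
    hg0.comp (Tendsto.atTop_mul_const hεpos tendsto_id)
  have hR : Tendsto (fun x => N^2 * ((F (x * b) - F (x * a)) / (1 - F x))^2
      + N^3 * ((1 - F (x * ε)) / (1 - F x))^2 * (1 - F (x * ε))) atTop
      (nhds (N^2 * (a ^ (-α) - b ^ (-α))^2 + N^3 * (ε ^ (-α))^2 * 0)) :=
    ((hq_t.pow 2).const_mul _).add (((hr_t.pow 2).const_mul _).mul hr0_t)
  have hRlt : N^2 * (a ^ (-α) - b ^ (-α))^2 + N^3 * (ε ^ (-α))^2 * 0 < δ := by
    rw [mul_zero, add_zero]; exact hφ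
  have hev := hR.eventually_lt_const hRlt
  filter_upwards [hev, eventually_ge_atTop (1:ℝ)] with x hx1 hx2
  have hxpos : (0:ℝ) < x := lt_of_lt_of_le one_pos hx2
  have hxab : x * a ≤ x * b := mul_le_mul_of_nonneg_left hab hxpos.le
  have hq0 : 0 ≤ F (x * b) - F (x * a) := sub_nonneg.2 (hFmono hxab)
  have hr0' : 0 ≤ 1 - F (x * ε) := (hgpos _).le
  -- event inclusion
  have hEsub : ∀ ω ∈ {ω | Lstat c (fun i => X i ω) > x ∧
      (⨆ i, X i ω) ≤ x - (c ⟨1, by omega⟩ / (1 + c ⟨1, by omega⟩)) * x},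
      (∃ i j : Fin (m+2), i ≠ j ∧ X i ω ∈ Set.Ioc (x * a) (x * b) ∧
        X j ω ∈ Set.Ioc (x * a) (x * b)) ∨
      (∃ i j k : Fin (m+2), i ≠ j ∧ i ≠ k ∧ j ≠ k ∧
        X i ω ∈ Set.Ioi (x * ε) ∧ X j ω ∈ Set.Ioi (x * ε) ∧ X k ω ∈ Set.Ioi (x * ε)) := by
    intro ω hω
    obtain ⟨hωL, hωM⟩ := hω
    rw [hone] at hωM
    have hM : ∀ i, X i ω ≤ x * b := by
      intro i
      refine le_trans (le_ciSup (f := fun j => X j ω) (Set.Finite.bddAbove (Set.finite_range _)) i) ?_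
      refine le_trans hωM (le_of_eq ?_)
      rw [hbdef]
      field_simp
      ring
    rcases det_aux c (fun i => X i ω) hc0' hc1' hcnn x ε b K hxpos hεpos hbdef hKdef hωL hM
      with ⟨i, j, hij, hi, hj⟩ | ⟨i, j, k, hij, hik, hjk, hi, hj, hk⟩
    · exact Or.inl ⟨i, j, hij, Set.mem_Ioc.2 ⟨hi, hM i⟩, Set.mem_Ioc.2 ⟨hj, hM j⟩⟩
    · exact Or.inr ⟨i, j, k, hij, hik, hjk, hi, hj, hk⟩
  have hPbound := prob_bound X hindep _ (x * a) (x * b) (x * ε)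
    (F (x * b) - F (x * a)) (1 - F (x * ε)) hq0 hr0'
    (fun i => hIoc i _ _ hxab) (fun i => hIoi i _) hEsub
  have hgx : 0 < 1 - F x := hgpos x
  have hiden : N^2 * (F (x * b) - F (x * a))^2 + N^3 * (1 - F (x * ε))^3
      = (N^2 * ((F (x * b) - F (x * a)) / (1 - F x))^2
        + N^3 * ((1 - F (x * ε)) / (1 - F x))^2 * (1 - F (x * ε))) * (1 - F x)^2 := by
    field_simp
  calc ‖(ℙ {ω | Lstat c (fun i => X i ω) > x ∧
        (⨆ i, X i ω) ≤ x - (c ⟨1, by omega⟩ / (1 + c ⟨1, by omega⟩)) * x}).toReal‖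
      = (ℙ {ω | Lstat c (fun i => X i ω) > x ∧
        (⨆ i, X i ω) ≤ x - (c ⟨1, by omega⟩ / (1 + c ⟨1, by omega⟩)) * x}).toReal :=
        Real.norm_of_nonneg ENNReal.toReal_nonneg
    _ ≤ N^2 * (F (x * b) - F (x * a))^2 + N^3 * (1 - F (x * ε))^3 := hPbound
    _ = (N^2 * ((F (x * b) - F (x * a)) / (1 - F x))^2
        + N^3 * ((1 - F (x * ε)) / (1 - F x))^2 * (1 - F (x * ε))) * (1 - F x)^2 := hiden
    _ ≤ δ * (1 - F x)^2 := mul_le_mul_of_nonneg_right hx1.le (sq_nonneg _)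
    _ = δ * ‖(1 - F x)^2‖ := by rw [Real.norm_of_nonneg (sq_nonneg _)]
end

section
/- Let F_n be a distribution function on [0,∞) whose survival function 1−F_n is regularly varying at infinity with index −α for some α ∈ (0,1), and fix c̃ ∈ (0,1). Define V_α(x) = ∫₀^{c̃x} ((1 − u/x)^{-α} − 1) dF_n(u). Then lim_{x→∞} V_α(x)/(1−F_n(x)) = c̃^{-α}(1 − (1−c̃)^{-α}) + α ∫₀^{c̃} u^{-α}(1−u)^{-(α+1)} du. -/
open Filter MeasureTheory Real Set

private lemma ftc_aux {α : ℝ} {y : ℝ} (hy0 : 0 ≤ y) (hy1 : y < 1) :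
    ∫ s in Ioo (0:ℝ) y, α * (1 - s) ^ (-(α+1)) = (1 - y) ^ (-α) - 1 := by
  have h1 : ∀ s ∈ uIcc (0:ℝ) y, HasDerivAt (fun t : ℝ => (1 - t) ^ (-α))
      (α * (1-s)^(-(α+1))) s := by
    intro s hs
    rw [uIcc_of_le hy0] at hs
    have hne : 1 - s ≠ 0 := by
      have := hs.2; intro h; nlinarith
    have hd : HasDerivAt (fun t : ℝ => 1 - t) (-1) s := (hasDerivAt_id s).const_sub 1
    have := hd.rpow_const (p := -α) (Or.inl hne)
    have he : -α - 1 = -(α+1) := by ring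
    rw [he] at this
    convert this using 1
    ring
  have h2 : IntervalIntegrable (fun s : ℝ => α * (1-s)^(-(α+1))) volume 0 y := by
    apply ContinuousOn.intervalIntegrable
    apply continuousOn_const.mul
    apply ContinuousOn.rpow_const (continuousOn_const.sub continuousOn_id)
    intro s hs
    rw [uIcc_of_le hy0] at hs
    left
    have := hs.2; intro h; simp only [Pi.sub_apply, id_eq] at h; nlinarith
  have h3 := intervalIntegral.integral_eq_sub_of_hasDerivAt h1 h2
  rw [intervalIntegral.integral_of_le hy0, integral_Ioc_eq_integral_Ioo] at h3
  rw [h3]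
  norm_num

private lemma int_rpow {r : ℝ} (hr : -1 < r) {c : ℝ} (hc : 0 < c) :
    IntegrableOn (fun s : ℝ => s ^ r) (Ioo 0 c) := by
  have := intervalIntegral.intervalIntegrable_rpow' (a := 0) (b := c) hr
  rw [intervalIntegrable_iff, uIoc_of_le hc.le] at this
  exact this.mono_set Ioo_subset_Ioc_self

private lemma potter {G : ℝ → ℝ} (hanti : Antitone G) (hpos : ∀ t, 0 < G t)
    {β t₀ : ℝ} (hβ : 0 < β) (ht₀ : 1 ≤ t₀)
    (hhalf : ∀ u, t₀ ≤ u → G (u/2) ≤ 2^β * G u) :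
    ∀ t s : ℝ, 0 < s → s ≤ 1 → t₀ ≤ s * t → G (s*t) ≤ 2^β * s^(-β) * G t := by
  have h2β : (0:ℝ) < 2^β := rpow_pos_of_pos two_pos β
  have hstep : ∀ u r : ℝ, t₀ ≤ u → 1/2 ≤ r → r ≤ 1 → G (r*u) ≤ 2^β * G u := by
    intro u r hu hr1 hr2
    have hu0 : (0:ℝ) < u := lt_of_lt_of_le (by linarith) hu
    have : u/2 ≤ r*u := by nlinarith
    exact le_trans (hanti this) (hhalf u hu)
  have Q : ∀ k : ℕ, ∀ t : ℝ, t₀ ≤ (2:ℝ)^(-(k:ℝ)) * t →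
      G ((2:ℝ)^(-(k:ℝ)) * t) ≤ (2:ℝ)^(β*k) * G t := by
    intro k
    induction k with
    | zero => intro t ht; simp
    | succ k ih =>
      intro t ht
      have hsplit : (2:ℝ)^(-((k+1:ℕ):ℝ)) = (1/2) * (2:ℝ)^(-(k:ℝ)) := by
        push_cast
        rw [show -((k:ℝ)+1) = (-1) + (-(k:ℝ)) by ring, rpow_add two_pos, rpow_neg_one]
        ring
      have hu : t₀ ≤ (2:ℝ)^(-(k:ℝ)) * t := by
        have h1 : (0:ℝ) < (2:ℝ)^(-((k+1:ℕ):ℝ)) * t := lt_of_lt_of_le (by linarith) ht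
        have h2 : (0:ℝ) < (2:ℝ)^(-(k:ℝ)) * t := by
          rw [hsplit] at h1; nlinarith
        calc t₀ ≤ (2:ℝ)^(-((k+1:ℕ):ℝ)) * t := ht
        _ = (1/2) * ((2:ℝ)^(-(k:ℝ)) * t) := by rw [hsplit]; ring
        _ ≤ (2:ℝ)^(-(k:ℝ)) * t := by nlinarith
      have h1 : G ((2:ℝ)^(-((k+1:ℕ):ℝ)) * t) ≤ 2^β * G ((2:ℝ)^(-(k:ℝ)) * t) := by
        rw [hsplit, mul_assoc]
        exact hstep _ _ hu le_rfl (by norm_num)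
      calc G ((2:ℝ)^(-((k+1:ℕ):ℝ)) * t) ≤ 2^β * G ((2:ℝ)^(-(k:ℝ)) * t) := h1
      _ ≤ 2^β * ((2:ℝ)^(β*k) * G t) := by
          have := ih t hu
          nlinarith
      _ = (2:ℝ)^(β*((k+1:ℕ):ℝ)) * G t := by
          rw [← mul_assoc, ← rpow_add two_pos]
          congr 2
          push_cast; ring
  intro t s hs0 hs1 hst
  have ht0 : (0:ℝ) < t := by
    rcases le_or_gt t 0 with h | h
    · exfalso; nlinarith [mul_nonpos_of_nonneg_of_nonpos hs0.le h]
    · exact h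
  set k := Nat.floor (Real.logb 2 s⁻¹) with hk
  have hsinv : (1:ℝ) ≤ s⁻¹ := by
    rw [one_le_inv_iff₀]
    exact ⟨hs0, hs1⟩
  have hlogb : (0:ℝ) ≤ logb 2 s⁻¹ := logb_nonneg one_lt_two hsinv
  have hk1 : (2:ℝ)^(k:ℝ) ≤ s⁻¹ := by
    calc (2:ℝ)^(k:ℝ) ≤ 2^(logb 2 s⁻¹) :=
          rpow_le_rpow_of_exponent_le one_le_two (Nat.floor_le hlogb)
    _ = s⁻¹ := rpow_logb two_pos (by norm_num) (inv_pos.mpr hs0)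
  have hk2 : s⁻¹ < (2:ℝ)^((k:ℝ)+1) := by
    calc s⁻¹ = 2^(logb 2 s⁻¹) := (rpow_logb two_pos (by norm_num) (inv_pos.mpr hs0)).symm
    _ < 2^((k:ℝ)+1) := rpow_lt_rpow_of_exponent_lt one_lt_two (Nat.lt_floor_add_one _)
  have hsle : s ≤ (2:ℝ)^(-(k:ℝ)) := by
    rw [rpow_neg (by norm_num : (0:ℝ) ≤ 2)]
    have h := inv_anti₀ (rpow_pos_of_pos two_pos (k:ℝ)) hk1
    rwa [inv_inv] at h
  have hslt : (2:ℝ)^(-((k:ℝ)+1)) < s := by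
    rw [rpow_neg (by norm_num : (0:ℝ) ≤ 2)]
    have h := inv_strictAnti₀ (inv_pos.mpr hs0) hk2
    rwa [inv_inv] at h
  have h2k2mk : (2:ℝ)^(k:ℝ) * (2:ℝ)^(-(k:ℝ)) = 1 := by
    rw [← rpow_add two_pos]; simp
  set r := s * (2:ℝ)^(k:ℝ) with hr
  set u := (2:ℝ)^(-(k:ℝ)) * t with hu
  have hru : r * u = s * t := by
    calc r * u = s * ((2:ℝ)^(k:ℝ) * (2:ℝ)^(-(k:ℝ))) * t := by rw [hr, hu]; ring
    _ = s * t := by rw [h2k2mk]; ring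
  have hr2 : r ≤ 1 := by
    calc r ≤ (2:ℝ)^(-(k:ℝ)) * (2:ℝ)^(k:ℝ) :=
          mul_le_mul_of_nonneg_right hsle (rpow_pos_of_pos two_pos _).le
    _ = 1 := by rw [mul_comm]; exact h2k2mk
  have hr1 : 1/2 ≤ r := by
    have h12 : (2:ℝ)^(-((k:ℝ)+1)) * 2^(k:ℝ) = 1/2 := by
      rw [← rpow_add two_pos, show -((k:ℝ)+1) + k = -1 by ring, rpow_neg_one]
      norm_num
    calc 1/2 = (2:ℝ)^(-((k:ℝ)+1)) * 2^(k:ℝ) := h12.symm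
    _ ≤ r := mul_le_mul_of_nonneg_right hslt.le (rpow_pos_of_pos two_pos _).le
  have huge : t₀ ≤ u := by
    calc t₀ ≤ s * t := hst
    _ ≤ (2:ℝ)^(-(k:ℝ)) * t := mul_le_mul_of_nonneg_right hsle ht0.le
  have hmain : G (s*t) ≤ 2^β * ((2:ℝ)^(β*(k:ℝ)) * G t) := by
    rw [← hru]
    calc G (r * u) ≤ 2^β * G u := hstep u r huge hr1 hr2
    _ ≤ 2^β * ((2:ℝ)^(β*(k:ℝ)) * G t) :=
        mul_le_mul_of_nonneg_left (Q k t huge) h2β.le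
  have hfin : (2:ℝ)^(β*(k:ℝ)) ≤ s^(-β) := by
    have h1 : ((2:ℝ)^(-(k:ℝ)))^(-β) ≤ s^(-β) :=
      rpow_le_rpow_of_nonpos hs0 hsle (by linarith)
    calc (2:ℝ)^(β*(k:ℝ)) = ((2:ℝ)^(-(k:ℝ)))^(-β) := by
          rw [← rpow_mul (by norm_num : (0:ℝ) ≤ 2)]
          congr 1
          ring
    _ ≤ s^(-β) := h1
  calc G (s*t) ≤ 2^β * ((2:ℝ)^(β*(k:ℝ)) * G t) := hmain
  _ ≤ 2^β * s^(-β) * G t := by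
      rw [mul_assoc]
      exact mul_le_mul_of_nonneg_left (mul_le_mul_of_nonneg_right hfin (hpos t).le) h2β.le

private lemma growth {G : ℝ → ℝ} (hanti : Antitone G) (hpos : ∀ t, 0 < G t)
    {γ t₁ : ℝ} (hγ0 : 0 < γ) (hγ : γ < 1) (ht₁ : 1 ≤ t₁)
    (hdbl : ∀ u, t₁ ≤ u → 2^(-γ) * G u ≤ G (2*u)) :
    Tendsto (fun x => x * G x) atTop atTop := by
  have ht₁0 : (0:ℝ) < t₁ := by linarith
  have R : ∀ k : ℕ, (2:ℝ)^(-γ*(k:ℝ)) * G t₁ ≤ G ((2:ℝ)^(k:ℝ) * t₁) := by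
    intro k
    induction k with
    | zero => simp
    | succ k ih =>
      have h2k : (1:ℝ) ≤ (2:ℝ)^(k:ℝ) := one_le_rpow one_le_two (Nat.cast_nonneg k)
      have hsplit : (2:ℝ)^(((k+1:ℕ):ℝ)) * t₁ = 2 * ((2:ℝ)^(k:ℝ) * t₁) := by
        push_cast
        rw [show (k:ℝ)+1 = 1 + k by ring, rpow_add two_pos, rpow_one]
        ring
      have hu : t₁ ≤ (2:ℝ)^(k:ℝ) * t₁ := le_mul_of_one_le_left ht₁0.le h2k
      calc (2:ℝ)^(-γ*((k+1:ℕ):ℝ)) * G t₁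
          = 2^(-γ) * ((2:ℝ)^(-γ*(k:ℝ)) * G t₁) := by
            rw [← mul_assoc, ← rpow_add two_pos]
            congr 2
            push_cast; ring
      _ ≤ 2^(-γ) * G ((2:ℝ)^(k:ℝ) * t₁) :=
            mul_le_mul_of_nonneg_left ih (rpow_pos_of_pos two_pos _).le
      _ ≤ G (2 * ((2:ℝ)^(k:ℝ) * t₁)) := hdbl _ hu
      _ = G ((2:ℝ)^(((k+1:ℕ):ℝ)) * t₁) := by rw [hsplit]
  set c₁ := 2^(-γ) * (t₁ * G t₁) with hc₁
  have hc₁0 : 0 < c₁ := by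
    have := hpos t₁
    have := rpow_pos_of_pos two_pos (-γ)
    positivity
  have key : ∀ x : ℝ, t₁ ≤ x → c₁ * (x/(2*t₁))^(1-γ) ≤ x * G x := by
    intro x hx
    have hx0 : (0:ℝ) < x := lt_of_lt_of_le ht₁0 hx
    have hxt : (1:ℝ) ≤ x / t₁ := (one_le_div ht₁0).mpr hx
    have hlogb : (0:ℝ) ≤ logb 2 (x/t₁) := logb_nonneg one_lt_two hxt
    set k := Nat.floor (logb 2 (x/t₁)) with hk
    have hk1 : (2:ℝ)^(k:ℝ) ≤ x/t₁ := by
      calc (2:ℝ)^(k:ℝ) ≤ 2^(logb 2 (x/t₁)) :=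
            rpow_le_rpow_of_exponent_le one_le_two (Nat.floor_le hlogb)
      _ = x/t₁ := rpow_logb two_pos (by norm_num) (by positivity)
    have hk2 : x/t₁ < (2:ℝ)^((k:ℝ)+1) := by
      calc x/t₁ = 2^(logb 2 (x/t₁)) := (rpow_logb two_pos (by norm_num) (by positivity)).symm
      _ < 2^((k:ℝ)+1) := rpow_lt_rpow_of_exponent_lt one_lt_two (Nat.lt_floor_add_one _)
    have hx1 : (2:ℝ)^(k:ℝ) * t₁ ≤ x := by
      rw [← le_div_iff₀ ht₁0]
      exact hk1
    have hx2 : x ≤ (2:ℝ)^((k:ℝ)+1) * t₁ := by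
      rw [← div_le_iff₀ ht₁0]
      exact hk2.le
    have hGx : (2:ℝ)^(-γ*((k:ℝ)+1)) * G t₁ ≤ G x := by
      have h := R (k+1)
      push_cast at h
      calc (2:ℝ)^(-γ*((k:ℝ)+1)) * G t₁ ≤ G ((2:ℝ)^((k:ℝ)+1) * t₁) := h
      _ ≤ G x := hanti hx2
    have step1 : ((2:ℝ)^(k:ℝ) * t₁) * ((2:ℝ)^(-γ*((k:ℝ)+1)) * G t₁) ≤ x * G x := by
      apply mul_le_mul hx1 hGx _ hx0.le
      have := hpos t₁
      positivity
    refine le_trans ?_ step1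
    have hrw : ((2:ℝ)^(k:ℝ) * t₁) * ((2:ℝ)^(-γ*((k:ℝ)+1)) * G t₁)
        = c₁ * ((2:ℝ)^(k:ℝ))^(1-γ) := by
      rw [hc₁]
      rw [← rpow_mul (by norm_num : (0:ℝ) ≤ 2)]
      rw [show ((2:ℝ)^(k:ℝ) * t₁) * ((2:ℝ)^(-γ*((k:ℝ)+1)) * G t₁)
          = ((2:ℝ)^(k:ℝ) * (2:ℝ)^(-γ*((k:ℝ)+1))) * (t₁ * G t₁) by ring]
      rw [← rpow_add two_pos, show (k:ℝ) + -γ*((k:ℝ)+1) = -γ + (k:ℝ)*(1-γ) by ring,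
        rpow_add two_pos]
      ring
    rw [hrw]
    apply mul_le_mul_of_nonneg_left _ hc₁0.le
    apply rpow_le_rpow (by positivity) _ (by linarith)
    calc x / (2*t₁) ≤ (2:ℝ)^((k:ℝ)+1) * t₁ / (2*t₁) := by
          apply div_le_div_of_nonneg_right hx2 (by positivity)
    _ = (2:ℝ)^(k:ℝ) := by
          rw [rpow_add two_pos, rpow_one]
          field_simp
  have htend : Tendsto (fun x : ℝ => c₁ * (x/(2*t₁))^(1-γ)) atTop atTop := by
    apply Tendsto.const_mul_atTop hc₁0
    apply (tendsto_rpow_atTop (by linarith : (0:ℝ) < 1-γ)).comp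
    exact Tendsto.atTop_div_const (by positivity) tendsto_id
  apply tendsto_atTop_mono' atTop _ htend
  filter_upwards [eventually_ge_atTop t₁] with x hx
  exact key x hx
private lemma fubini_aux {α c : ℝ} (hα : α ∈ Set.Ioo (0:ℝ) 1) (hc : c ∈ Set.Ioo (0:ℝ) 1)
    (Fn : StieltjesFunction ℝ) {x : ℝ} (hx : 0 < x) :
    ∫ u in Icc 0 (c*x), ((1 - u/x)^(-α) - 1) ∂Fn.measure
      = ∫ s in Ioo 0 c, α * (1-s)^(-(α+1)) * (Fn (c*x) - Fn (s*x)) := by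
  obtain ⟨hα0, hα1⟩ := hα
  obtain ⟨hc0, hc1⟩ := hc
  set μ := Fn.measure
  have hfin : μ (Icc 0 (c*x)) < ⊤ := by
    calc μ (Icc 0 (c*x)) ≤ μ (Ioc (-1) (c*x)) :=
          measure_mono (fun u hu => ⟨by linarith [hu.1], hu.2⟩)
    _ = ENNReal.ofReal (Fn (c*x) - Fn (-1)) := Fn.measure_Ioc _ _
    _ < ⊤ := ENNReal.ofReal_lt_top
  haveI : Fact (μ (Icc 0 (c*x)) < ⊤) := ⟨hfin⟩
  haveI : Fact (volume (Ioo (0:ℝ) c) < ⊤) := ⟨by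
    rw [Real.volume_Ioo]; exact ENNReal.ofReal_lt_top⟩
  set f : ℝ → ℝ → ℝ := fun u s => if s * x < u then α * (1-s)^(-(α+1)) else 0 with hf
  have hmeas : Measurable (Function.uncurry f) := by
    apply Measurable.ite
    · exact measurableSet_lt (measurable_snd.mul_const x) measurable_fst
    · fun_prop
    · fun_prop
  set K : ℝ := α * (1-c)^(-(α+1)) with hK
  have hK0 : 0 ≤ K := by
    have : (0:ℝ) < 1 - c := by linarith
    positivity
  set μ' := μ.restrict (Icc 0 (c*x)) with hμ'
  set ν' := volume.restrict (Ioo (0:ℝ) c) with hν'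
  have hae : ∀ᵐ p : ℝ × ℝ ∂(μ'.prod ν'), p.2 ∈ Ioo (0:ℝ) c := by
    rw [ae_iff]
    have h1 : {p : ℝ × ℝ | ¬ p.2 ∈ Ioo (0:ℝ) c} = univ ×ˢ (Ioo (0:ℝ) c)ᶜ := by
      ext p; simp
    rw [h1, Measure.prod_prod]
    have h2 : ν' ((Ioo (0:ℝ) c)ᶜ) = 0 := by
      rw [hν', Measure.restrict_apply measurableSet_Ioo.compl, compl_inter_self]
      exact measure_empty
    rw [h2, mul_zero]
  have hint : Integrable (Function.uncurry f) (μ'.prod ν') := by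
    apply Integrable.mono' (integrable_const K) hmeas.aestronglyMeasurable
    filter_upwards [hae] with p hp
    rcases lt_or_ge (p.2 * x) p.1 with h | h
    · have hcond : Function.uncurry f p = α * (1-p.2)^(-(α+1)) := if_pos h
      rw [hcond, Real.norm_eq_abs, abs_of_nonneg (by
        have : (0:ℝ) < 1 - p.2 := by linarith [hp.2]
        positivity)]
      apply mul_le_mul_of_nonneg_left _ hα0.le
      exact rpow_le_rpow_of_nonpos (by linarith) (by linarith [hp.2]) (by linarith)
    · have hcond : Function.uncurry f p = 0 := if_neg (not_lt.mpr h)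
      rw [hcond]; simpa using hK0
  have step1 : ∀ u ∈ Icc 0 (c*x), (1 - u/x)^(-α) - 1 = ∫ s in Ioo (0:ℝ) c, f u s := by
    intro u hu
    have hux : u/x ≤ c := by
      rw [div_le_iff₀ hx]; linarith [hu.2]
    have hux0 : 0 ≤ u/x := div_nonneg hu.1 hx.le
    have h1 : ∀ s, f u s = (Iio (u/x)).indicator (fun s => α * (1-s)^(-(α+1))) s := by
      intro s
      simp only [hf, indicator_apply, mem_Iio, lt_div_iff₀ hx]
    calc (1 - u/x)^(-α) - 1 = ∫ s in Ioo (0:ℝ) (u/x), α * (1-s)^(-(α+1)) :=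
          (ftc_aux hux0 (lt_of_le_of_lt hux hc1)).symm
    _ = ∫ s in Ioo (0:ℝ) c, f u s := by
        simp only [h1]
        rw [setIntegral_indicator measurableSet_Iio, Ioo_inter_Iio, min_eq_right hux]
  have step3 : ∀ s ∈ Ioo (0:ℝ) c,
      (∫ u in Icc 0 (c*x), f u s ∂μ) = α * (1-s)^(-(α+1)) * (Fn (c*x) - Fn (s*x)) := by
    intro s hs
    have h1 : ∀ u, f u s = (Ioi (s*x)).indicator (fun _ => α * (1-s)^(-(α+1))) u := by
      intro u
      simp only [hf, indicator_apply, mem_Ioi]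
    have h2 : Icc 0 (c*x) ∩ Ioi (s*x) = Ioc (s*x) (c*x) := by
      ext u
      simp only [mem_inter_iff, mem_Icc, mem_Ioi, mem_Ioc]
      constructor
      · rintro ⟨⟨_, h⟩, h'⟩; exact ⟨h', h⟩
      · rintro ⟨h', h⟩
        have : 0 < s * x := mul_pos hs.1 hx
        exact ⟨⟨by linarith, h⟩, h'⟩
    simp only [h1]
    rw [setIntegral_indicator measurableSet_Ioi, h2, setIntegral_const, measureReal_def,
      Fn.measure_Ioc, ENNReal.toReal_ofReal (sub_nonneg.mpr (Fn.mono
        (mul_le_mul_of_nonneg_right hs.2.le hx.le)))]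
    rw [smul_eq_mul]
    ring
  calc ∫ u in Icc 0 (c*x), ((1 - u/x)^(-α) - 1) ∂μ
      = ∫ u in Icc 0 (c*x), (∫ s in Ioo (0:ℝ) c, f u s) ∂μ :=
        setIntegral_congr_fun measurableSet_Icc step1
  _ = ∫ s in Ioo (0:ℝ) c, (∫ u in Icc 0 (c*x), f u s ∂μ) :=
        integral_integral_swap hint
  _ = ∫ s in Ioo 0 c, α * (1-s)^(-(α+1)) * (Fn (c*x) - Fn (s*x)) :=
        setIntegral_congr_fun measurableSet_Ioo step3

/-- Let `F_n` be a distribution function on `[0,∞)` whose survival function `1 − F_n` is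
regularly varying at infinity with index `−α` for some `α ∈ (0,1)`, and fix `c̃ ∈ (0,1)`.
With `V_α(x) = ∫₀^{c̃x} ((1 − u/x)^{-α} − 1) dF_n(u)`, one has
`lim_{x→∞} V_α(x)/(1−F_n(x)) = c̃^{-α}(1 − (1−c̃)^{-α}) + α ∫₀^{c̃} u^{-α}(1−u)^{-(α+1)} du`. -/
theorem stmt4 (α : ℝ) (hα : α ∈ Set.Ioo (0:ℝ) 1) (c : ℝ) (hc : c ∈ Set.Ioo (0:ℝ) 1)
    (Fn : StieltjesFunction ℝ) (h0 : ∀ x < (0:ℝ), Fn x = 0)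
    (h1 : Tendsto Fn atTop (nhds 1))
    (hRV : ∀ y > (0:ℝ),
      Tendsto (fun t => (1 - Fn (t * y)) / (1 - Fn t)) atTop (nhds (y ^ (-α)))) :
    Tendsto
      (fun x => (∫ u in Set.Icc 0 (c * x), ((1 - u / x) ^ (-α) - 1) ∂Fn.measure) /
        (1 - Fn x))
      atTop
      (nhds (c ^ (-α) * (1 - (1 - c) ^ (-α)) +
        α * ∫ u in Set.Ioo (0:ℝ) c, u ^ (-α) * (1 - u) ^ (-(α + 1)))) := by
  obtain ⟨hα0, hα1⟩ := hα
  obtain ⟨hc0, hc1⟩ := hc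
  -- basic facts
  have hFle1 : ∀ t, Fn t ≤ 1 := fun t => Fn.mono.ge_of_tendsto h1 t
  have hFnn : ∀ t, 0 ≤ Fn t := by
    intro t
    rcases lt_or_ge t 0 with h | h
    · rw [h0 t h]
    · calc (0:ℝ) = Fn (-1) := (h0 (-1) (by norm_num)).symm
      _ ≤ Fn t := Fn.mono (by linarith)
  have hGpos : ∀ t, 0 < 1 - Fn t := by
    intro t
    rcases lt_or_ge (Fn t) 1 with h | h
    · linarith
    have h1t : Fn t = 1 := le_antisymm (hFle1 t) h
    have hev : (fun s => (1 - Fn (s * 1)) / (1 - Fn s)) =ᶠ[atTop] fun _ => (0:ℝ) := by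
      filter_upwards [eventually_ge_atTop t] with s hs
      have h2 : Fn s = 1 := le_antisymm (hFle1 s) (h1t ▸ Fn.mono hs)
      have h3 : Fn (s * 1) = 1 := by rw [mul_one]; exact h2
      simp [h2, h3]
    have h4 : Tendsto (fun _ : ℝ => (0:ℝ)) atTop (nhds ((1:ℝ) ^ (-α))) :=
      Tendsto.congr' hev (hRV 1 one_pos)
    have h5 := tendsto_nhds_unique h4 tendsto_const_nhds
    rw [Real.one_rpow] at h5
    norm_num at h5
  have hGanti : Antitone (fun t => 1 - Fn t) := fun a b hab => by
    simp only [sub_le_sub_iff_left]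
    exact Fn.mono hab
  set β := (1+α)/2 with hβ
  have hαβ : α < β := by rw [hβ]; linarith
  have hβ1 : β < 1 := by rw [hβ]; linarith
  have hβ0 : 0 < β := by rw [hβ]; linarith
  -- Potter-type upper bound
  have h2βlt : ((1:ℝ)/2) ^ (-α) < 2 ^ β := by
    have : ((1:ℝ)/2) ^ (-α) = 2 ^ α := by
      rw [one_div, Real.inv_rpow (by norm_num : (0:ℝ) ≤ 2), ← Real.rpow_neg (by norm_num)]
      norm_num
    rw [this]
    exact Real.rpow_lt_rpow_of_exponent_lt one_lt_two hαβ
  obtain ⟨T, hT⟩ := eventually_atTop.mp ((hRV (1/2) (by norm_num)).eventually_le_const h2βlt)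
  set t₀ := max T 1 with ht₀
  have ht₀1 : (1:ℝ) ≤ t₀ := le_max_right _ _
  have hhalf : ∀ u, t₀ ≤ u → (1 - Fn (u/2)) ≤ 2^β * (1 - Fn u) := by
    intro u hu
    have h2 := hT u (le_trans (le_max_left _ _) hu)
    rw [div_le_iff₀ (hGpos u)] at h2
    calc 1 - Fn (u/2) = 1 - Fn (u * (1/2)) := by rw [show u/2 = u * (1/2) by ring]
    _ ≤ 2^β * (1 - Fn u) := h2
  have hPotter := potter hGanti hGpos hβ0 ht₀1 hhalf
  -- growth of x * G x
  have h2βlt' : (2:ℝ) ^ (-β) < 2 ^ (-α) := by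
    exact Real.rpow_lt_rpow_of_exponent_lt one_lt_two (by linarith)
  obtain ⟨T₁, hT₁⟩ := eventually_atTop.mp ((hRV 2 (by norm_num)).eventually_const_le h2βlt')
  set t₁ := max T₁ 1 with ht₁
  have ht₁1 : (1:ℝ) ≤ t₁ := le_max_right _ _
  have hdbl : ∀ u, t₁ ≤ u → 2^(-β) * (1 - Fn u) ≤ 1 - Fn (2*u) := by
    intro u hu
    have h2 := hT₁ u (le_trans (le_max_left _ _) hu)
    rw [le_div_iff₀ (hGpos u)] at h2
    calc 2^(-β) * (1 - Fn u) ≤ 1 - Fn (u * 2) := h2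
    _ = 1 - Fn (2*u) := by rw [mul_comm]
  have hgrow := growth hGanti hGpos hβ0 hβ1 ht₁1 hdbl
  -- the two pieces
  set ν' := volume.restrict (Ioo (0:ℝ) c) with hν'
  haveI : Fact (volume (Ioo (0:ℝ) c) < ⊤) := ⟨by
    rw [Real.volume_Ioo]; exact ENNReal.ofReal_lt_top⟩
  have hFnm : Measurable (Fn : ℝ → ℝ) := Fn.mono.measurable
  set φ : ℝ → ℝ → ℝ :=
    fun x s => α * (1-s)^(-(α+1)) * ((Fn (c*x) - Fn (s*x)) / (1 - Fn x)) with hφ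
  set ψ : ℝ → ℝ → ℝ := fun x s => if t₀ ≤ s * x then φ x s else 0 with hψ
  set χ : ℝ → ℝ → ℝ := fun x s => if t₀ ≤ s * x then 0 else φ x s with hχ
  set flim : ℝ → ℝ := fun s => α * (1-s)^(-(α+1)) * (s^(-α) - c^(-α)) with hflim
  have hφmeas : ∀ x, Measurable (φ x) := by
    intro x
    apply Measurable.mul
    · fun_prop
    · exact (measurable_const.sub (hFnm.comp (measurable_id.mul_const x))).div_const _
  have hcond : ∀ x : ℝ, MeasurableSet {s : ℝ | t₀ ≤ s * x} :=
    fun x => measurableSet_le measurable_const (measurable_id.mul_const x)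
  have hψmeas : ∀ x, Measurable (ψ x) := fun x =>
    Measurable.ite (hcond x) (hφmeas x) measurable_const
  have hχmeas : ∀ x, Measurable (χ x) := fun x =>
    Measurable.ite (hcond x) measurable_const (hφmeas x)
  have h1c : (0:ℝ) < 1 - c := by linarith
  -- pointwise bound for φ
  have hφbnd : ∀ x : ℝ, 0 < x → ∀ s ∈ Ioo (0:ℝ) c,
      0 ≤ φ x s ∧ φ x s ≤ α * (1-c)^(-(α+1)) * (1 - Fn x)⁻¹ := by
    intro x hx s hs
    have hsx : s * x ≤ c * x := mul_le_mul_of_nonneg_right hs.2.le hx.le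
    have hD0 : 0 ≤ Fn (c*x) - Fn (s*x) := sub_nonneg.mpr (Fn.mono hsx)
    have hD1 : Fn (c*x) - Fn (s*x) ≤ 1 := by
      have := hFle1 (c*x); have := hFnn (s*x); linarith
    have hA : (1-s)^(-(α+1)) ≤ (1-c)^(-(α+1)) :=
      rpow_le_rpow_of_nonpos h1c (by linarith [hs.2]) (by linarith)
    have h1s0 : (0:ℝ) < 1 - s := by linarith [hs.2]
    have hA0 : (0:ℝ) ≤ (1-s)^(-(α+1)) := by positivity
    constructor
    · have h1s : (0:ℝ) < 1 - s := by linarith [hs.2]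
      have hgx := hGpos x
      simp only [hφ]
      apply mul_nonneg (by positivity) (div_nonneg hD0 hgx.le)
    · simp only [hφ]
      have hgx := hGpos x
      have h2 : (Fn (c*x) - Fn (s*x)) / (1 - Fn x) ≤ (1 - Fn x)⁻¹ := by
        rw [div_eq_mul_inv]
        nlinarith [inv_pos.mpr hgx]
      apply mul_le_mul _ h2 (by positivity) (by positivity)
      exact mul_le_mul_of_nonneg_left hA hα0.le
  -- integrability of φ, ψ, χ
  have hφint : ∀ x : ℝ, 0 < x → Integrable (φ x) ν' := by
    intro x hx
    apply Integrable.mono' (integrable_const (α * (1-c)^(-(α+1)) * (1 - Fn x)⁻¹))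
      (hφmeas x).aestronglyMeasurable
    filter_upwards [ae_restrict_mem measurableSet_Ioo] with s hs
    rw [Real.norm_eq_abs, abs_of_nonneg (hφbnd x hx s hs).1]
    exact (hφbnd x hx s hs).2
  have hψint : ∀ x : ℝ, 0 < x → Integrable (ψ x) ν' := by
    intro x hx
    apply Integrable.mono' (hφint x hx) (hψmeas x).aestronglyMeasurable
    filter_upwards [ae_restrict_mem measurableSet_Ioo] with s hs
    simp only [hψ]
    rcases le_or_gt t₀ (s*x) with h | h
    · rw [if_pos h, Real.norm_eq_abs, abs_of_nonneg (hφbnd x hx s hs).1]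
    · rw [if_neg (not_le.mpr h)]
      simpa using (hφbnd x hx s hs).1
  have hχint : ∀ x : ℝ, 0 < x → Integrable (χ x) ν' := by
    intro x hx
    apply Integrable.mono' (hφint x hx) (hχmeas x).aestronglyMeasurable
    filter_upwards [ae_restrict_mem measurableSet_Ioo] with s hs
    simp only [hχ]
    rcases le_or_gt t₀ (s*x) with h | h
    · rw [if_pos h]
      simpa using (hφbnd x hx s hs).1
    · rw [if_neg (not_le.mpr h), Real.norm_eq_abs, abs_of_nonneg (hφbnd x hx s hs).1]
  -- Part A : dominated convergence
  have hA : Tendsto (fun x => ∫ s, ψ x s ∂ν') atTop (nhds (∫ s, flim s ∂ν')) := by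
    apply tendsto_integral_filter_of_dominated_convergence
      (fun s => (α * (1-c)^(-(α+1)) * 2^β) * s^(-β))
    · exact Eventually.of_forall fun x => (hψmeas x).aestronglyMeasurable
    · filter_upwards [eventually_ge_atTop (1:ℝ)] with x hx1
      filter_upwards [ae_restrict_mem measurableSet_Ioo] with s hs
      have hx : (0:ℝ) < x := by linarith
      simp only [hψ]
      rcases le_or_gt t₀ (s*x) with h | h
      · rw [if_pos h, Real.norm_eq_abs, abs_of_nonneg (hφbnd x hx s hs).1]
        have hgx := hGpos x
        have hPot := hPotter x s hs.1 (by linarith [hs.2]) h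
        have hD : Fn (c*x) - Fn (s*x) ≤ 1 - Fn (s*x) := by
          have := hFle1 (c*x); linarith
        have hD0 : 0 ≤ Fn (c*x) - Fn (s*x) := sub_nonneg.mpr (Fn.mono
          (mul_le_mul_of_nonneg_right hs.2.le hx.le))
        have h2 : (Fn (c*x) - Fn (s*x)) / (1 - Fn x) ≤ 2^β * s^(-β) := by
          rw [div_le_iff₀ hgx]
          calc Fn (c*x) - Fn (s*x) ≤ 1 - Fn (s*x) := hD
          _ ≤ 2^β * s^(-β) * (1 - Fn x) := hPot
        have hA : (1-s)^(-(α+1)) ≤ (1-c)^(-(α+1)) :=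
          rpow_le_rpow_of_nonpos h1c (by linarith [hs.2]) (by linarith)
        calc φ x s ≤ (α * (1-c)^(-(α+1))) * (2^β * s^(-β)) := by
              apply mul_le_mul (mul_le_mul_of_nonneg_left hA hα0.le) h2
                (div_nonneg hD0 hgx.le) (by positivity)
        _ = (α * (1-c)^(-(α+1)) * 2^β) * s^(-β) := by ring
      · rw [if_neg (not_le.mpr h)]
        simp only [norm_zero]
        have : (0:ℝ) < s := hs.1
        positivity
    · apply Integrable.const_mul
      exact int_rpow (by linarith) hc0
    · filter_upwards [ae_restrict_mem measurableSet_Ioo] with s hs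
      have hev : (fun x => φ x s) =ᶠ[atTop] (fun x => ψ x s) := by
        filter_upwards [eventually_ge_atTop (t₀/s)] with x hx
        simp only [hψ]
        rw [if_pos ((div_le_iff₀' hs.1).mp hx)]
      apply Tendsto.congr' hev
      have htend2 : Tendsto (fun x => (Fn (c*x) - Fn (s*x))/(1 - Fn x)) atTop
          (nhds (s^(-α) - c^(-α))) := by
        have h := (hRV s hs.1).sub (hRV c hc0)
        refine h.congr fun t => ?_
        rw [mul_comm t s, mul_comm t c, div_sub_div_same]
        congr 1
        ring
      have := htend2.const_mul (α * (1-s)^(-(α+1)))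
      simpa [hφ, hflim] using this
  -- Part B : error term tends to 0
  have hB : Tendsto (fun x => ∫ s, χ x s ∂ν') atTop (nhds 0) := by
    have hgtend : Tendsto (fun x => (α * (1-c)^(-(α+1)) * t₀) * (x * (1 - Fn x))⁻¹)
        atTop (nhds 0) := by
      have := hgrow.inv_tendsto_atTop
      simpa using this.const_mul (α * (1-c)^(-(α+1)) * t₀)
    apply squeeze_zero_norm' _ hgtend
    filter_upwards [eventually_ge_atTop (1:ℝ)] with x hx1
    have hx : (0:ℝ) < x := by linarith
    have hgx := hGpos x
    set Cx := α * (1-c)^(-(α+1)) * (1 - Fn x)⁻¹ with hCx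
    have hCx0 : 0 ≤ Cx := by positivity
    have hdom : ∀ᵐ s ∂ν', ‖χ x s‖ ≤ (Ioo (0:ℝ) (t₀/x)).indicator (fun _ => Cx) s := by
      filter_upwards [ae_restrict_mem measurableSet_Ioo] with s hs
      rcases le_or_gt t₀ (s*x) with h | h
      · simp only [hχ, if_pos h, norm_zero]
        exact indicator_nonneg (fun _ _ => hCx0) s
      · simp only [hχ, if_neg (not_le.mpr h)]
        rw [Real.norm_eq_abs,
          abs_of_nonneg (hφbnd x hx s hs).1,
          indicator_of_mem (by
            constructor
            · exact hs.1
            · rw [lt_div_iff₀ hx]; exact h)]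
        exact (hφbnd x hx s hs).2
    have hindint : Integrable ((Ioo (0:ℝ) (t₀/x)).indicator (fun _ => Cx)) ν' := by
      apply Integrable.indicator (integrable_const Cx) measurableSet_Ioo
    calc ‖∫ s, χ x s ∂ν'‖ ≤ ∫ s, ‖χ x s‖ ∂ν' := norm_integral_le_integral_norm _
    _ ≤ ∫ s, (Ioo (0:ℝ) (t₀/x)).indicator (fun _ => Cx) s ∂ν' := by
        apply integral_mono_ae ((hχint x hx).norm) hindint hdom
    _ = Cx * (ν' (Ioo (0:ℝ) (t₀/x))).toReal := by
        rw [integral_indicator measurableSet_Ioo, setIntegral_const, smul_eq_mul, mul_comm, measureReal_def]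
    _ ≤ Cx * (t₀/x) := by
        apply mul_le_mul_of_nonneg_left _ hCx0
        apply ENNReal.toReal_le_of_le_ofReal (by positivity)
        calc ν' (Ioo (0:ℝ) (t₀/x)) ≤ volume (Ioo (0:ℝ) (t₀/x)) :=
              Measure.restrict_le_self _
        _ = ENNReal.ofReal (t₀/x) := by rw [Real.volume_Ioo, sub_zero]
    _ = (α * (1-c)^(-(α+1)) * t₀) * (x * (1 - Fn x))⁻¹ := by
        rw [hCx, mul_inv]
        field_simp
  -- combine
  have hsum := hA.add hB
  rw [add_zero] at hsum
  have heq : (fun x => ∫ s, ψ x s ∂ν' + ∫ s, χ x s ∂ν') =ᶠ[atTop]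
      (fun x => (∫ u in Set.Icc 0 (c * x), ((1 - u / x) ^ (-α) - 1) ∂Fn.measure) /
        (1 - Fn x)) := by
    filter_upwards [eventually_ge_atTop (1:ℝ)] with x hx1
    have hx : (0:ℝ) < x := by linarith
    rw [fubini_aux ⟨hα0, hα1⟩ ⟨hc0, hc1⟩ Fn hx, ← integral_div]
    rw [← integral_add (hψint x hx) (hχint x hx)]
    apply setIntegral_congr_fun measurableSet_Ioo
    intro s _
    rcases le_or_gt t₀ (s*x) with h | h
    · simp only [hψ, hχ]
      simp only [if_pos h, add_zero]
      simp only [hφ]; rw [mul_div_assoc]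
    · simp only [hψ, hχ]
      simp only [if_neg (not_le.mpr h), zero_add]
      simp only [hφ]; rw [mul_div_assoc]
  have hfinal := Tendsto.congr' heq hsum
  -- identify the limit
  have hL : (∫ s, flim s ∂ν') = c ^ (-α) * (1 - (1 - c) ^ (-α)) +
      α * ∫ u in Set.Ioo (0:ℝ) c, u ^ (-α) * (1 - u) ^ (-(α + 1)) := by
    have i1 : IntegrableOn (fun s : ℝ => s^(-α)*(1-s)^(-(α+1))) (Ioo 0 c) := by
      apply Integrable.mono' ((int_rpow (by linarith : (-1:ℝ) < -α) hc0).const_mul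
        ((1-c)^(-(α+1))))
        ((by fun_prop : Measurable fun s : ℝ => s^(-α)*(1-s)^(-(α+1))).aestronglyMeasurable)
      filter_upwards [ae_restrict_mem measurableSet_Ioo] with s hs
      have hs0 : (0:ℝ) < s := hs.1
      have hs1 : s < c := hs.2
      have h1s : (0:ℝ) < 1 - s := by linarith
      rw [Real.norm_eq_abs, abs_of_nonneg (by positivity)]
      rw [mul_comm ((1-c)^(-(α+1)))]
      apply mul_le_mul_of_nonneg_left _ (by positivity)
      exact rpow_le_rpow_of_nonpos h1c (by linarith) (by linarith)
    have i2 : IntegrableOn (fun s : ℝ => α * (1-s)^(-(α+1))) (Ioo 0 c) := by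
      apply Integrable.mono' (integrable_const (α * (1-c)^(-(α+1))))
        ((by fun_prop : Measurable fun s : ℝ => α*(1-s)^(-(α+1))).aestronglyMeasurable)
      filter_upwards [ae_restrict_mem measurableSet_Ioo] with s hs
      rw [Real.norm_eq_abs, abs_of_nonneg (by
        have : (0:ℝ) < 1 - s := by linarith [hs.2]
        positivity)]
      apply mul_le_mul_of_nonneg_left _ hα0.le
      exact rpow_le_rpow_of_nonpos h1c (by linarith [hs.2]) (by linarith)
    have hsplit : ∀ s : ℝ, flim s =
        α * (s^(-α)*(1-s)^(-(α+1))) - c^(-α) * (α * (1-s)^(-(α+1))) := by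
      intro s
      simp only [hflim]
      ring
    calc (∫ s, flim s ∂ν')
        = ∫ s in Ioo (0:ℝ) c,
            (α * (s^(-α)*(1-s)^(-(α+1))) - c^(-α) * (α * (1-s)^(-(α+1)))) := by
          rw [hν']
          exact setIntegral_congr_fun measurableSet_Ioo (fun s _ => hsplit s)
    _ = α * (∫ s in Ioo (0:ℝ) c, s^(-α)*(1-s)^(-(α+1)))
          - c^(-α) * ∫ s in Ioo (0:ℝ) c, α * (1-s)^(-(α+1)) := by
          rw [integral_sub (i1.const_mul α) (i2.const_mul (c^(-α))),
            integral_const_mul, integral_const_mul]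
    _ = α * (∫ s in Ioo (0:ℝ) c, s^(-α)*(1-s)^(-(α+1))) - c^(-α) * ((1-c)^(-α) - 1) := by
          rw [ftc_aux hc0.le hc1]
    _ = c ^ (-α) * (1 - (1 - c) ^ (-α)) +
          α * ∫ u in Set.Ioo (0:ℝ) c, u ^ (-α) * (1 - u) ^ (-(α + 1)) := by
          ring
  rw [hL] at hfinal
  exact hfinal
end

section
/- Let F_n be a distribution function on [0,∞) whose survival function 1−F_n is regularly varying at infinity with index −α for some α ≥ 1, and fix c̃ ∈ (0,1). Define V_α(x) = ∫₀^{c̃x} ((1 − u/x)^{-α} − 1) dF_n(u) and μ(x) = x^{-1} ∫₀^{x} u dF_n(u). Then lim_{x→∞} V_α(x)/μ(x) = α. -/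
open Filter MeasureTheory Real Set

lemma ptwise_lower (α : ℝ) (hα : 1 ≤ α) (w : ℝ) (hw0 : 0 ≤ w) (hw1 : w < 1) :
    1 + α * w ≤ (1 - w) ^ (-α) := by
  have h1w : 0 < 1 - w := by linarith
  rw [Real.rpow_def_of_pos h1w]
  have hlog : Real.log (1 - w) ≤ -w := by
    have := Real.log_le_sub_one_of_pos h1w
    linarith
  have h2 : α * w ≤ -α * Real.log (1 - w) := by nlinarith
  calc 1 + α * w ≤ 1 + (-α * Real.log (1 - w)) := by linarith
    _ ≤ Real.exp (-α * Real.log (1 - w)) := by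
        have := Real.add_one_le_exp (-α * Real.log (1 - w)); linarith
    _ = Real.exp (Real.log (1 - w) * -α) := by ring_nf

lemma ptwise_upper (α : ℝ) (hα : 1 ≤ α) (δ : ℝ) (hδ0 : 0 ≤ δ) (hδ1 : δ < 1)
    (w : ℝ) (hw : w ∈ Icc 0 δ) :
    (1 - w) ^ (-α) - 1 ≤ α * (1 - δ) ^ (-(α + 1)) * w := by
  have h1δ : 0 < 1 - δ := by linarith
  set C : ℝ := α * (1 - δ) ^ (-(α + 1)) with hC
  have key : ‖(1 - w) ^ (-α) - (1 - (0:ℝ)) ^ (-α)‖ ≤ C * (w - 0) := by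
    apply norm_image_sub_le_of_norm_deriv_le_segment'
      (f := fun t => (1 - t) ^ (-α)) (f' := fun t => α * (1 - t) ^ (-(α + 1)))
      (a := 0) (b := δ) ?_ ?_ w hw
    · intro t ht
      have h1t : 0 < 1 - t := by rcases ht with ⟨_, h⟩; linarith
      have hd : HasDerivAt (fun t : ℝ => (1 - t) ^ (-α))
          (-α * (1 - t) ^ (-α - 1) * (-1)) t := by
        have hbase : HasDerivAt (fun t : ℝ => 1 - t) (-1) t := by
          simpa using (hasDerivAt_id t).const_sub (1:ℝ)
        exact (Real.hasDerivAt_rpow_const (Or.inl h1t.ne')).comp t hbase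
      have : -α * (1 - t) ^ (-α - 1) * (-1) = α * (1 - t) ^ (-(α + 1)) := by
        ring_nf
      rw [this] at hd
      exact hd.hasDerivWithinAt
    · intro t ht
      have h1t : 0 < 1 - t := by rcases ht with ⟨_, h⟩; linarith
      have hle : (1 - t) ^ (-(α + 1)) ≤ (1 - δ) ^ (-(α + 1)) := by
        apply Real.rpow_le_rpow_of_nonpos h1δ (by rcases ht with ⟨_, h⟩; linarith)
        linarith
      have hpos : (0:ℝ) ≤ α * (1 - t) ^ (-(α + 1)) := by
        positivity
      rw [Real.norm_eq_abs, abs_of_nonneg hpos]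
      have : (0:ℝ) < α := by linarith
      nlinarith [Real.rpow_nonneg h1t.le (-(α+1))]
  rw [Real.norm_eq_abs, sub_zero, sub_zero, Real.one_rpow] at key
  have hwnn : 0 ≤ w := hw.1
  calc (1 - w) ^ (-α) - 1 ≤ |(1 - w) ^ (-α) - 1| := le_abs_self _
    _ ≤ C * w := key

lemma Fn_le_one (Fn : StieltjesFunction ℝ) (h1 : Tendsto Fn atTop (nhds 1)) :
    ∀ x, Fn x ≤ 1 := fun x => Fn.mono.ge_of_tendsto h1 x

lemma Fn_lt_one (α : ℝ) (hα : 1 ≤ α) (Fn : StieltjesFunction ℝ)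
    (h1 : Tendsto Fn atTop (nhds 1))
    (hRV : ∀ y > (0:ℝ),
      Tendsto (fun t => (1 - Fn (t * y)) / (1 - Fn t)) atTop (nhds (y ^ (-α)))) :
    ∀ x, Fn x < 1 := by
  intro x
  rcases lt_or_ge (Fn x) 1 with h | h
  · exact h
  have hx1 : Fn x = 1 := le_antisymm (Fn_le_one Fn h1 x) h
  exfalso
  have hone : ∀ t ≥ x, Fn t = 1 := fun t ht =>
    le_antisymm (Fn_le_one Fn h1 t) (hx1 ▸ Fn.mono ht)
  have h2 := hRV 2 (by norm_num)
  have hzero : Tendsto (fun t => (1 - Fn (t * 2)) / (1 - Fn t)) atTop (nhds 0) := by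
    apply Tendsto.congr' _ tendsto_const_nhds
    filter_upwards [eventually_ge_atTop (max x 0)] with t ht
    have ht' : x ≤ t := le_trans (le_max_left _ _) ht
    rw [hone t ht']
    simp
  have := tendsto_nhds_unique h2 hzero
  have : (0:ℝ) < (2:ℝ) ^ (-α) := Real.rpow_pos_of_pos (by norm_num) _
  linarith [tendsto_nhds_unique h2 hzero, this]

lemma RV' (α : ℝ) (Fn : StieltjesFunction ℝ)
    (hRV : ∀ y > (0:ℝ),
      Tendsto (fun t => (1 - Fn (t * y)) / (1 - Fn t)) atTop (nhds (y ^ (-α)))) :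
    ∀ y > (0:ℝ),
      Tendsto (fun t => (1 - Fn (y * t)) / (1 - Fn t)) atTop (nhds (y ^ (-α))) := by
  intro y hy
  simpa [mul_comm] using hRV y hy

lemma meas_Ioc (Fn : StieltjesFunction ℝ) (a b : ℝ) (hab : a ≤ b) :
    (Fn.measure (Ioc a b)).toReal = Fn b - Fn a := by
  rw [Fn.measure_Ioc, ENNReal.toReal_ofReal (by linarith [Fn.mono hab])]

lemma intOn (Fn : StieltjesFunction ℝ) (f : ℝ → ℝ) (a b : ℝ)
    (hf : ContinuousOn f (Icc a b)) : IntegrableOn f (Icc a b) Fn.measure :=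
  hf.integrableOn_compact isCompact_Icc

lemma intOnIoc (Fn : StieltjesFunction ℝ) (a b : ℝ) :
    IntegrableOn (fun u => u) (Ioc a b) Fn.measure :=
  (intOn Fn (fun u => u) a b continuous_id.continuousOn).mono_set Ioc_subset_Icc_self

lemma int_Ioc_ge (Fn : StieltjesFunction ℝ) (a b : ℝ) (hab : a ≤ b) :
    a * (Fn b - Fn a) ≤ ∫ u in Ioc a b, u ∂Fn.measure := by
  have h := setIntegral_ge_of_const_le (μ := Fn.measure) (f := fun u => u) (c := a)
    measurableSet_Ioc
    (by rw [Fn.measure_Ioc]; exact ENNReal.ofReal_ne_top)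
    (fun x hx => le_of_lt hx.1)
    (intOnIoc Fn a b)
  rwa [measureReal_def, meas_Ioc Fn a b hab, smul_eq_mul, mul_comm] at h

lemma key_tendsto (α : ℝ) (hα : 1 ≤ α) (Fn : StieltjesFunction ℝ)
    (hL : ∀ x, Fn x < 1)
    (hRV : ∀ y > (0:ℝ),
      Tendsto (fun t => (1 - Fn (t * y)) / (1 - Fn t)) atTop (nhds (y ^ (-α)))) :
    Tendsto (fun x => (∫ u in Icc 0 x, u ∂Fn.measure) / (x * (1 - Fn x)))
      atTop atTop := by
  set y : ℕ → ℝ := fun k => ((2:ℝ)^k)⁻¹ with hy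
  have hypos : ∀ k, 0 < y k := fun k => by positivity
  have hyle1 : ∀ k, y k ≤ 1 := fun k => by
    rw [hy]; simp only [inv_le_one_iff₀]; right; exact one_le_pow₀ (by norm_num)
  have hysucc : ∀ k, y (k+1) = y k / 2 := fun k => by
    rw [hy]; simp [pow_succ]; ring
  have hydec : ∀ k, y (k+1) ≤ y k := fun k => by
    rw [hysucc]; linarith [hypos k]
  -- limits of the ratio terms
  have hmulrpow : ∀ t : ℝ, 0 < t → t * t ^ (-α) = t ^ (1-α) := by
    intro t ht
    nth_rewrite 1 [← Real.rpow_one t]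
    rw [← Real.rpow_add ht]
    ring_nf
  have hterm : ∀ k : ℕ, (1:ℝ)/2 ≤ y (k+1) * ((y (k+1)) ^ (-α) - (y k) ^ (-α)) := by
    intro k
    have h1 : y (k+1) * (y (k+1)) ^ (-α) = (y (k+1)) ^ (1-α) :=
      hmulrpow _ (hypos (k+1))
    have h2 : y (k+1) * (y k) ^ (-α) = (1/2) * ((y k) ^ (1-α)) := by
      rw [hysucc, show y k / 2 = (1/2) * y k by ring, mul_assoc, hmulrpow _ (hypos k)]
    have h3 : (y k) ^ (1-α) ≤ (y (k+1)) ^ (1-α) :=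
      Real.rpow_le_rpow_of_nonpos (hypos (k+1)) (hydec k) (by linarith)
    have h4 : (1:ℝ) ≤ (y (k+1)) ^ (1-α) :=
      Real.one_le_rpow_of_pos_of_le_one_of_nonpos (hypos (k+1)) (hyle1 (k+1)) (by linarith)
    rw [mul_sub, h1, h2]
    linarith
  rw [tendsto_atTop]
  intro M
  obtain ⟨n, hn⟩ := exists_nat_ge (2 * (M + 1))
  have hnM : M + 1 ≤ (n:ℝ) / 2 := by
    rw [le_div_iff₀ (by norm_num : (0:ℝ) < 2)]; linarith
  set s : ℝ := ∑ k ∈ Finset.range n,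
    y (k+1) * ((y (k+1)) ^ (-α) - (y k) ^ (-α)) with hs
  have hsge : (n:ℝ)/2 ≤ s := by
    rw [hs]
    calc (n:ℝ)/2 = ∑ _k ∈ Finset.range n, (1:ℝ)/2 := by
          rw [Finset.sum_const, Finset.card_range]; ring
      _ ≤ _ := Finset.sum_le_sum (fun k _ => hterm k)
  set R : ℝ → ℝ := fun x => ∑ k ∈ Finset.range n,
    y (k+1) * ((1 - Fn (y (k+1) * x)) / (1 - Fn x)
      - (1 - Fn (y k * x)) / (1 - Fn x)) with hR
  have hRtendsto : Tendsto R atTop (nhds s) := by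
    rw [hR, hs]
    apply tendsto_finset_sum
    intro k _
    exact (((RV' α Fn hRV) (y (k+1)) (hypos (k+1))).sub
      ((RV' α Fn hRV) (y k) (hypos k))).const_mul _
  -- pointwise bound
  have hbound : ∀ x : ℝ, 0 < x →
      R x ≤ (∫ u in Icc 0 x, u ∂Fn.measure) / (x * (1 - Fn x)) := by
    intro x hx
    have hLx : 0 < 1 - Fn x := by linarith [hL x]
    -- the sum lower-bounds the integral over Ioc (y n * x) x
    have hind : ∀ m : ℕ,
        (∑ k ∈ Finset.range m, (y (k+1) * x) * (Fn (y k * x) - Fn (y (k+1) * x)))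
          ≤ ∫ u in Ioc (y m * x) x, u ∂Fn.measure := by
      intro m
      induction m with
      | zero =>
        simp [hy]
      | succ m ih =>
        have hsplit : ∫ u in Ioc (y (m+1) * x) x, u ∂Fn.measure
            = (∫ u in Ioc (y (m+1) * x) (y m * x), u ∂Fn.measure)
              + ∫ u in Ioc (y m * x) x, u ∂Fn.measure := by
          rw [← setIntegral_union]
          · rw [Set.Ioc_union_Ioc_eq_Ioc
              (mul_le_mul_of_nonneg_right (hydec m) hx.le)
              (by nlinarith [hyle1 m, hypos m])]
          · exact Set.Ioc_disjoint_Ioc_of_le le_rfl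
          · exact measurableSet_Ioc
          · exact intOnIoc Fn _ _
          · exact intOnIoc Fn _ _
        rw [hsplit, Finset.sum_range_succ]
        have hge := int_Ioc_ge Fn (y (m+1) * x) (y m * x)
          (mul_le_mul_of_nonneg_right (hydec m) hx.le)
        linarith [ih]
    have hIcc : ∫ u in Ioc (y n * x) x, u ∂Fn.measure
        ≤ ∫ u in Icc 0 x, u ∂Fn.measure := by
      have h1 : ∫ u in Icc 0 x, u ∂Fn.measure
          = (∫ u in Icc 0 (y n * x), u ∂Fn.measure)
            + ∫ u in Ioc (y n * x) x, u ∂Fn.measure := by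
        rw [← setIntegral_union]
        · rw [Icc_union_Ioc_eq_Icc (by positivity) (by nlinarith [hyle1 n, hypos n])]
        · exact Set.disjoint_left.2 (fun u hu hu' => absurd hu'.1 (not_lt.2 hu.2))
        · exact measurableSet_Ioc
        · exact intOn Fn (fun u => u) 0 _ continuous_id.continuousOn
        · exact intOnIoc Fn _ _
      have h2 : 0 ≤ ∫ u in Icc 0 (y n * x), u ∂Fn.measure :=
        setIntegral_nonneg measurableSet_Icc (fun u hu => hu.1)
      linarith
    have halg : R x = (∑ k ∈ Finset.range n,
        (y (k+1) * x) * (Fn (y k * x) - Fn (y (k+1) * x))) / (x * (1 - Fn x)) := by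
      rw [hR, Finset.sum_div]
      apply Finset.sum_congr rfl
      intro k _
      field_simp
      ring
    rw [halg]
    exact (div_le_div_iff_of_pos_right (mul_pos hx hLx)).2 ((hind n).trans hIcc)
  filter_upwards [hRtendsto.eventually (eventually_ge_nhds
      (show s - 1 < s by linarith)), eventually_gt_atTop (0:ℝ)] with x hx1 hx2
  have hb := hbound x hx2
  have : M ≤ s - 1 := by linarith
  linarith

lemma int_Ioc_le (Fn : StieltjesFunction ℝ) (a b : ℝ) (hab : a ≤ b) :
    ∫ u in Ioc a b, u ∂Fn.measure ≤ b * (Fn b - Fn a) := by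
  have h : ∫ u in Ioc a b, u ∂Fn.measure ≤ ∫ _ in Ioc a b, b ∂Fn.measure := by
    apply setIntegral_mono_on (intOnIoc Fn a b) (integrableOn_const ?_)
      measurableSet_Ioc (fun x hx => hx.2)
    rw [Fn.measure_Ioc]; exact ENNReal.ofReal_ne_top
  rwa [setIntegral_const, smul_eq_mul, measureReal_def, meas_Ioc Fn a b hab, mul_comm] at h

lemma int_split (Fn : StieltjesFunction ℝ) (y x : ℝ) (h0 : 0 ≤ y) (hyx : y ≤ x) :
    ∫ u in Icc 0 x, u ∂Fn.measure
      = (∫ u in Icc 0 y, u ∂Fn.measure) + ∫ u in Ioc y x, u ∂Fn.measure := by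
  rw [← setIntegral_union]
  · rw [Icc_union_Ioc_eq_Icc h0 hyx]
  · exact Set.disjoint_left.2 (fun u hu hu' => absurd hu'.1 (not_lt.2 hu.2))
  · exact measurableSet_Ioc
  · exact intOn Fn (fun u => u) 0 y continuous_id.continuousOn
  · exact intOnIoc Fn y x

lemma K2 (α : ℝ) (hα : 1 ≤ α) (Fn : StieltjesFunction ℝ)
    (hL : ∀ x, Fn x < 1)
    (hRV : ∀ y > (0:ℝ),
      Tendsto (fun t => (1 - Fn (t * y)) / (1 - Fn t)) atTop (nhds (y ^ (-α))))
    (δ : ℝ) (hδ : 0 < δ) :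
    Tendsto (fun x => (1 - Fn (δ * x)) / (x⁻¹ * ∫ u in Icc 0 x, u ∂Fn.measure))
      atTop (nhds 0) := by
  have h1 := (RV' α Fn hRV) δ hδ
  have h2 := (key_tendsto α hα Fn hL hRV).inv_tendsto_atTop
  have h3 := h1.mul h2
  rw [mul_zero] at h3
  apply h3.congr'
  filter_upwards [eventually_gt_atTop (0:ℝ)] with x hx
  have hLx : (0:ℝ) < 1 - Fn x := by linarith [hL x]
  simp only [Pi.inv_apply]
  rcases eq_or_ne (∫ u in Icc 0 x, u ∂Fn.measure) 0 with h | h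
  · simp [h]
  · field_simp
lemma mu_pos (α : ℝ) (hα : 1 ≤ α) (Fn : StieltjesFunction ℝ)
    (hL : ∀ x, Fn x < 1)
    (hRV : ∀ y > (0:ℝ),
      Tendsto (fun t => (1 - Fn (t * y)) / (1 - Fn t)) atTop (nhds (y ^ (-α)))) :
    ∀ᶠ x in atTop, 0 < x⁻¹ * ∫ u in Icc 0 x, u ∂Fn.measure := by
  filter_upwards [(key_tendsto α hα Fn hL hRV).eventually_ge_atTop 1,
    eventually_gt_atTop (0:ℝ)] with x h1 hx
  have hLx : (0:ℝ) < 1 - Fn x := by linarith [hL x]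
  have hxL : 0 < x * (1 - Fn x) := mul_pos hx hLx
  have hI : x * (1 - Fn x) ≤ ∫ u in Icc 0 x, u ∂Fn.measure := by
    rw [le_div_iff₀ hxL] at h1; linarith
  exact mul_pos (inv_pos.2 hx) (lt_of_lt_of_le hxL hI)

-- continuity of the integrand
lemma g_contOn (α : ℝ) (x b : ℝ) (hx : 0 < x) (hb : b < x) :
    ContinuousOn (fun u : ℝ => (1 - u / x) ^ (-α) - 1) (Icc 0 b) := by
  apply ContinuousOn.sub _ continuousOn_const
  apply ContinuousOn.rpow_const
  · exact (continuousOn_const.sub (continuousOn_id.div_const x))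
  · intro u hu
    left
    have : u / x < 1 := (div_lt_one hx).2 (lt_of_le_of_lt hu.2 hb)
    intro h; rw [sub_eq_zero] at h; exact absurd h.symm (ne_of_lt this)

lemma V_lower (α : ℝ) (hα : 1 ≤ α) (c : ℝ) (hc : c ∈ Set.Ioo (0:ℝ) 1)
    (Fn : StieltjesFunction ℝ) (hle1 : ∀ z, Fn z ≤ 1) (x : ℝ) (hx : 0 < x) :
    α * (x⁻¹ * ∫ u in Icc 0 x, u ∂Fn.measure) - α * (1 - Fn (c * x))
      ≤ ∫ u in Icc 0 (c * x), ((1 - u / x) ^ (-α) - 1) ∂Fn.measure := by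
  obtain ⟨hc0, hc1⟩ := hc
  have hcx : c * x < x := by nlinarith
  have hcx0 : 0 ≤ c * x := by positivity
  have step1 : ∫ u in Icc 0 (c * x), (α * x⁻¹ * u) ∂Fn.measure
      ≤ ∫ u in Icc 0 (c * x), ((1 - u / x) ^ (-α) - 1) ∂Fn.measure := by
    apply setIntegral_mono_on
    · exact intOn Fn _ 0 (c*x) (continuousOn_const.mul continuousOn_id)
    · exact intOn Fn _ 0 (c*x) (g_contOn α x (c*x) hx hcx)
    · exact measurableSet_Icc
    · intro u hu
      have hw0 : 0 ≤ u / x := div_nonneg hu.1 hx.le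
      have hw1 : u / x < 1 := (div_lt_one hx).2 (lt_of_le_of_lt hu.2 hcx)
      have := ptwise_lower α hα (u / x) hw0 hw1
      have heq : α * x⁻¹ * u = α * (u / x) := by field_simp
      linarith [heq ▸ le_refl (α * x⁻¹ * u)]
  have step2 : ∫ u in Icc 0 (c * x), (α * x⁻¹ * u) ∂Fn.measure
      = (α * x⁻¹) * ∫ u in Icc 0 (c * x), u ∂Fn.measure := by
    rw [← integral_const_mul]
  have step3 := int_split Fn (c*x) x hcx0 hcx.le
  have step4 : ∫ u in Ioc (c*x) x, u ∂Fn.measure ≤ x * (1 - Fn (c*x)) := by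
    calc ∫ u in Ioc (c*x) x, u ∂Fn.measure ≤ x * (Fn x - Fn (c*x)) :=
          int_Ioc_le Fn (c*x) x hcx.le
      _ ≤ x * (1 - Fn (c*x)) := by
          apply mul_le_mul_of_nonneg_left _ hx.le
          linarith [hle1 x]
  have hαpos : (0:ℝ) < α := by linarith
  have : α * x⁻¹ * (∫ u in Icc 0 (c*x), u ∂Fn.measure)
      ≥ α * x⁻¹ * ((∫ u in Icc 0 x, u ∂Fn.measure) - x * (1 - Fn (c*x))) := by
    apply mul_le_mul_of_nonneg_left _ (by positivity)
    linarith
  have hexp : α * x⁻¹ * ((∫ u in Icc 0 x, u ∂Fn.measure) - x * (1 - Fn (c*x)))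
      = α * (x⁻¹ * ∫ u in Icc 0 x, u ∂Fn.measure) - α * (1 - Fn (c*x)) := by
    field_simp
  linarith [step1, step2 ▸ step1]

lemma V_upper (α : ℝ) (hα : 1 ≤ α) (c : ℝ) (hc : c ∈ Set.Ioo (0:ℝ) 1)
    (Fn : StieltjesFunction ℝ) (hle1 : ∀ z, Fn z ≤ 1) (δ : ℝ) (hδ : δ ∈ Set.Ioo 0 c)
    (x : ℝ) (hx : 0 < x) :
    ∫ u in Icc 0 (c * x), ((1 - u / x) ^ (-α) - 1) ∂Fn.measure
      ≤ α * (1 - δ) ^ (-(α + 1)) * (x⁻¹ * ∫ u in Icc 0 x, u ∂Fn.measure)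
        + α * (1 - c) ^ (-(α + 1)) * (1 - Fn (δ * x)) := by
  obtain ⟨hc0, hc1⟩ := hc
  obtain ⟨hδ0, hδc⟩ := hδ
  have hδ1 : δ < 1 := lt_trans hδc hc1
  have hcx : c * x < x := by nlinarith
  have hδx : δ * x ≤ c * x := by nlinarith
  have hδx0 : 0 ≤ δ * x := by positivity
  have h1δ : (0:ℝ) < 1 - δ := by linarith
  have h1c : (0:ℝ) < 1 - c := by linarith
  have hKδ : (0:ℝ) ≤ α * (1 - δ) ^ (-(α + 1)) :=
    mul_nonneg (by linarith) (Real.rpow_nonneg h1δ.le _)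
  have hKc : (0:ℝ) ≤ α * (1 - c) ^ (-(α + 1)) :=
    mul_nonneg (by linarith) (Real.rpow_nonneg h1c.le _)
  -- split the V integral
  have hgInt : IntegrableOn (fun u : ℝ => (1 - u / x) ^ (-α) - 1) (Icc 0 (c*x))
      Fn.measure := intOn Fn _ 0 (c*x) (g_contOn α x (c*x) hx hcx)
  have hsplit : ∫ u in Icc 0 (c * x), ((1 - u / x) ^ (-α) - 1) ∂Fn.measure
      = (∫ u in Icc 0 (δ * x), ((1 - u / x) ^ (-α) - 1) ∂Fn.measure)
        + ∫ u in Ioc (δ * x) (c * x), ((1 - u / x) ^ (-α) - 1) ∂Fn.measure := by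
    rw [← setIntegral_union]
    · rw [Icc_union_Ioc_eq_Icc hδx0 hδx]
    · exact Set.disjoint_left.2 (fun u hu hu' => absurd hu'.1 (not_lt.2 hu.2))
    · exact measurableSet_Ioc
    · exact hgInt.mono_set (Icc_subset_Icc le_rfl hδx)
    · exact hgInt.mono_set (Ioc_subset_Icc_self.trans (Icc_subset_Icc hδx0 le_rfl))
  -- first piece
  have part1 : ∫ u in Icc 0 (δ * x), ((1 - u / x) ^ (-α) - 1) ∂Fn.measure
      ≤ α * (1 - δ) ^ (-(α + 1)) * (x⁻¹ * ∫ u in Icc 0 x, u ∂Fn.measure) := by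
    have pt : ∫ u in Icc 0 (δ * x), ((1 - u / x) ^ (-α) - 1) ∂Fn.measure
        ≤ ∫ u in Icc 0 (δ * x), (α * (1 - δ) ^ (-(α + 1)) * x⁻¹ * u) ∂Fn.measure := by
      apply setIntegral_mono_on
      · exact intOn Fn _ 0 (δ*x) (g_contOn α x (δ*x) hx (lt_of_le_of_lt hδx hcx))
      · exact intOn Fn _ 0 (δ*x) ((continuousOn_const.mul continuousOn_id))
      · exact measurableSet_Icc
      · intro u hu
        have hw : u / x ∈ Icc 0 δ := by
          constructor
          · exact div_nonneg hu.1 hx.le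
          · rw [div_le_iff₀ hx]; linarith [hu.2]
        have := ptwise_upper α hα δ hδ0.le hδ1 (u/x) hw
        have heq : α * (1 - δ) ^ (-(α + 1)) * x⁻¹ * u
            = α * (1 - δ) ^ (-(α + 1)) * (u / x) := by field_simp
        linarith [heq ▸ le_refl (α * (1 - δ) ^ (-(α + 1)) * x⁻¹ * u)]
    have hmono : ∫ u in Icc 0 (δ * x), u ∂Fn.measure
        ≤ ∫ u in Icc 0 x, u ∂Fn.measure := by
      rw [int_split Fn (δ*x) x hδx0 (le_of_lt (lt_of_le_of_lt hδx hcx))]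
      have : 0 ≤ ∫ u in Ioc (δ*x) x, u ∂Fn.measure :=
        setIntegral_nonneg measurableSet_Ioc (fun u hu => le_trans hδx0 hu.1.le)
      linarith
    have heq2 : ∫ u in Icc 0 (δ * x), (α * (1 - δ) ^ (-(α + 1)) * x⁻¹ * u) ∂Fn.measure
        = (α * (1 - δ) ^ (-(α + 1)) * x⁻¹) * ∫ u in Icc 0 (δ * x), u ∂Fn.measure := by
      rw [← integral_const_mul]
    rw [heq2] at pt
    calc ∫ u in Icc 0 (δ * x), ((1 - u / x) ^ (-α) - 1) ∂Fn.measure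
        ≤ (α * (1 - δ) ^ (-(α + 1)) * x⁻¹) * ∫ u in Icc 0 (δ * x), u ∂Fn.measure := pt
      _ ≤ (α * (1 - δ) ^ (-(α + 1)) * x⁻¹) * ∫ u in Icc 0 x, u ∂Fn.measure := by
          apply mul_le_mul_of_nonneg_left hmono (by positivity)
      _ = α * (1 - δ) ^ (-(α + 1)) * (x⁻¹ * ∫ u in Icc 0 x, u ∂Fn.measure) := by ring
  -- second piece
  have part2 : ∫ u in Ioc (δ * x) (c * x), ((1 - u / x) ^ (-α) - 1) ∂Fn.measure
      ≤ α * (1 - c) ^ (-(α + 1)) * (1 - Fn (δ * x)) := by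
    have pt : ∫ u in Ioc (δ * x) (c * x), ((1 - u / x) ^ (-α) - 1) ∂Fn.measure
        ≤ ∫ _u in Ioc (δ * x) (c * x), (α * (1 - c) ^ (-(α + 1)) * c) ∂Fn.measure := by
      apply setIntegral_mono_on
      · exact (intOn Fn _ 0 (c*x) (g_contOn α x (c*x) hx hcx)).mono_set
          (Ioc_subset_Icc_self.trans (Icc_subset_Icc hδx0 le_rfl))
      · exact integrableOn_const (by rw [Fn.measure_Ioc]; exact ENNReal.ofReal_ne_top)
      · exact measurableSet_Ioc
      · intro u hu
        have hw : u / x ∈ Icc 0 c := by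
          constructor
          · exact div_nonneg (le_trans hδx0 hu.1.le) hx.le
          · rw [div_le_iff₀ hx]; linarith [hu.2]
        have h1 := ptwise_upper α hα c hc0.le hc1 (u/x) hw
        have h2 : α * (1 - c) ^ (-(α + 1)) * (u / x) ≤ α * (1 - c) ^ (-(α + 1)) * c :=
          mul_le_mul_of_nonneg_left hw.2 hKc
        linarith
    rw [setIntegral_const, smul_eq_mul, measureReal_def, meas_Ioc Fn (δ*x) (c*x) hδx] at pt
    calc ∫ u in Ioc (δ * x) (c * x), ((1 - u / x) ^ (-α) - 1) ∂Fn.measure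
        ≤ (Fn (c*x) - Fn (δ*x)) * (α * (1 - c) ^ (-(α + 1)) * c) := pt
      _ ≤ α * (1 - c) ^ (-(α + 1)) * (1 - Fn (δ * x)) := by
          have hnn : 0 ≤ 1 - Fn (δ * x) := by linarith [hle1 (δ*x)]
          have hFle : Fn (c*x) - Fn (δ*x) ≤ 1 - Fn (δ*x) := by linarith [hle1 (c*x)]
          have e1 : (Fn (c*x) - Fn (δ*x)) * (α * (1 - c) ^ (-(α + 1)) * c)
              ≤ (1 - Fn (δ*x)) * (α * (1 - c) ^ (-(α + 1)) * c) := by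
            apply mul_le_mul_of_nonneg_right hFle (by positivity)
          have e2 : (1 - Fn (δ*x)) * (α * (1 - c) ^ (-(α + 1)) * c)
              ≤ (1 - Fn (δ*x)) * (α * (1 - c) ^ (-(α + 1)) * 1) := by
            apply mul_le_mul_of_nonneg_left _ hnn
            apply mul_le_mul_of_nonneg_left hc1.le (by positivity)
          nlinarith [e1, e2]
  linarith [hsplit, part1, part2]

/-- Let `F_n` be a distribution function on `[0,∞)` whose survival function `1 − F_n` is
regularly varying at infinity with index `−α` for some `α ≥ 1`, and fix `c̃ ∈ (0,1)`.
With `V_α(x) = ∫₀^{c̃x} ((1 − u/x)^{-α} − 1) dF_n(u)` and `μ(x) = x^{-1} ∫₀^x u dF_n(u)`,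
one has `lim_{x→∞} V_α(x)/μ(x) = α`. -/
theorem stmt5 (α : ℝ) (hα : 1 ≤ α) (c : ℝ) (hc : c ∈ Set.Ioo (0:ℝ) 1)
    (Fn : StieltjesFunction ℝ) (h0 : ∀ x < (0:ℝ), Fn x = 0)
    (h1 : Tendsto Fn atTop (nhds 1))
    (hRV : ∀ y > (0:ℝ),
      Tendsto (fun t => (1 - Fn (t * y)) / (1 - Fn t)) atTop (nhds (y ^ (-α)))) :
    Tendsto
      (fun x => (∫ u in Set.Icc 0 (c * x), ((1 - u / x) ^ (-α) - 1) ∂Fn.measure) /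
        (x⁻¹ * ∫ u in Set.Icc (0:ℝ) x, u ∂Fn.measure))
      atTop (nhds α) := by
  have hle1 := Fn_le_one Fn h1
  have hlt1 := Fn_lt_one α hα Fn h1 hRV
  have hc0 := hc.1
  have hc1 := hc.2
  rw [Metric.tendsto_nhds]
  intro ε hε
  -- choose δ
  have hKcont : Tendsto (fun δ : ℝ => α * (1 - δ) ^ (-(α+1))) (nhds 0) (nhds α) := by
    have hcont : ContinuousAt (fun δ : ℝ => α * (1 - δ) ^ (-(α+1))) 0 := by
      apply ContinuousAt.mul continuousAt_const
      apply ContinuousAt.rpow_const (continuousAt_const.sub continuousAt_id)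
      left; norm_num
    have h00 : α * (1 - (0:ℝ)) ^ (-(α+1)) = α := by
      rw [sub_zero, Real.one_rpow, mul_one]
    simpa [h00] using hcont.tendsto
  have hev1 : ∀ᶠ δ in nhdsWithin (0:ℝ) (Ioi 0), α * (1 - δ) ^ (-(α+1)) < α + ε/2 :=
    eventually_nhdsWithin_of_eventually_nhds
      (hKcont.eventually (eventually_lt_nhds (by linarith)))
  have hev2 : ∀ᶠ δ in nhdsWithin (0:ℝ) (Ioi 0), δ < c :=
    eventually_nhdsWithin_of_eventually_nhds (eventually_lt_nhds hc0)
  have hev3 : ∀ᶠ δ in nhdsWithin (0:ℝ) (Ioi 0), δ ∈ Ioi (0:ℝ) :=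
    eventually_mem_nhdsWithin
  obtain ⟨δ, hδK, hδc, hδ0⟩ := (hev1.and (hev2.and hev3)).exists
  -- the eventual bounds
  have h3 := (K2 α hα Fn hlt1 hRV c hc0).const_mul α
  rw [mul_zero] at h3
  have E3 := h3.eventually (eventually_lt_nhds hε)
  have h4 := (K2 α hα Fn hlt1 hRV δ hδ0).const_mul (α * (1 - c) ^ (-(α+1)))
  rw [mul_zero] at h4
  have E4 := h4.eventually (eventually_lt_nhds (show (0:ℝ) < ε/2 by linarith))
  filter_upwards [eventually_gt_atTop (0:ℝ), mu_pos α hα Fn hlt1 hRV, E3, E4]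
    with x hx hμ hE3 hE4
  set μx := x⁻¹ * ∫ u in Icc (0:ℝ) x, u ∂Fn.measure with hμx
  set V := ∫ u in Icc 0 (c * x), ((1 - u / x) ^ (-α) - 1) ∂Fn.measure with hV
  have hlow := V_lower α hα c hc Fn hle1 x hx
  have hup := V_upper α hα c hc Fn hle1 δ ⟨hδ0, hδc⟩ x hx
  rw [Real.dist_eq, abs_sub_lt_iff]
  have hμne : μx ≠ 0 := ne_of_gt hμ
  constructor
  · -- V/μ - α < ε
    have step : V / μx ≤ α * (1 - δ) ^ (-(α+1))
        + α * (1 - c) ^ (-(α+1)) * ((1 - Fn (δ * x)) / μx) := by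
      have step0 : V / μx ≤ (α * (1 - δ) ^ (-(α+1)) * μx
          + α * (1 - c) ^ (-(α+1)) * (1 - Fn (δ * x))) / μx :=
        (div_le_div_iff_of_pos_right hμ).2 hup
      have stepeq : (α * (1 - δ) ^ (-(α+1)) * μx
          + α * (1 - c) ^ (-(α+1)) * (1 - Fn (δ * x))) / μx
          = α * (1 - δ) ^ (-(α+1))
            + α * (1 - c) ^ (-(α+1)) * ((1 - Fn (δ * x)) / μx) := by
        field_simp
      linarith [stepeq ▸ step0]
    have : V / μx < (α + ε/2) + ε/2 := by
      calc V / μx ≤ _ := step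
        _ < (α + ε/2) + ε/2 := by
            apply add_lt_add hδK
            exact hE4
    linarith
  · -- α - V/μ < ε
    have step : α - α * ((1 - Fn (c * x)) / μx) ≤ V / μx := by
      have h' : (α * μx - α * (1 - Fn (c * x))) / μx ≤ V / μx :=
        (div_le_div_iff_of_pos_right hμ).2 hlow
      calc α - α * ((1 - Fn (c * x)) / μx)
          = (α * μx - α * (1 - Fn (c * x))) / μx := by field_simp
        _ ≤ V / μx := h'
    have : α * ((1 - Fn (c * x)) / μx) < ε := hE3
    linarith
end
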